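/- arXiv:1303.6321 — 10 statements merged into one kernel-verified Lean document; each statement's English description precedes it below -/
import Mathlib

section
/- If a_1,...,a_n are real numbers with a_1+...+a_n = 1, then there exists t in [0,π] such that S(t) = Σ_{j=1}^n a_j sin(jt) = 0 and C(t) = Σ_{j=1}^n a_j cos(jt) < 0. -/
open Real Filter Complex Finset Polynomial



lemma alt_lemma : ∀ (m : ℕ) (W : Polynomial ℝ) (v : ℕ → ℝ),
    (∀ j j', j < j' → j' ≤ m → v j' < v j) →
    (∀ j, j ≤ m → 0 ≤ (-1:ℝ)^j * W.eval (v j)) →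
    0 < W.eval (v 0) → m ≤ W.natDegree := by
  intro m
  induction m with
  | zero => exact fun _ _ _ _ _ => Nat.zero_le _
  | succ m ih =>
    intro W v hord hsign hpos
    have h10 : v 1 < v 0 := hord 0 1 one_pos (by omega)
    have hW1 : W.eval (v 1) ≤ 0 := by
      have h := hsign 1 (by omega)
      simpa using h
    have hcont : ContinuousOn (fun x => W.eval x) (Set.Icc (v 1) (v 0)) :=
      (Polynomial.continuous W).continuousOn
    have h0mem : (0:ℝ) ∈ Set.Icc (W.eval (v 1)) (W.eval (v 0)) := ⟨hW1, le_of_lt hpos⟩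
    obtain ⟨ξ, hξmem, hξval⟩ := intermediate_value_Icc (le_of_lt h10) hcont h0mem
    have hξ0 : ξ < v 0 := by
      rcases lt_or_eq_of_le hξmem.2 with h | h
      · exact h
      · rw [h] at hξval; simp only at hξval; linarith
    obtain ⟨V, hV⟩ := Polynomial.dvd_iff_isRoot.mpr hξval
    have hWne : W ≠ 0 := fun h => by simp [h] at hpos
    have hVne : V ≠ 0 := fun h => by rw [h, mul_zero] at hV; exact hWne hV
    have hdeg : W.natDegree = V.natDegree + 1 := by
      rw [hV, Polynomial.natDegree_mul (Polynomial.X_sub_C_ne_zero ξ) hVne,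
        Polynomial.natDegree_X_sub_C]
      omega
    have hV0 : 0 < V.eval (v 0) := by
      have h : W.eval (v 0) = (v 0 - ξ) * V.eval (v 0) := by
        rw [hV]; simp [Polynomial.eval_mul]
      nlinarith [hpos, h]
    have key : m ≤ V.natDegree := by
      apply ih V (fun j => if j = 0 then v 0 else v (j+1))
      · intro j j' hjj' hj'm
        have hj' : j' ≠ 0 := by omega
        by_cases hj : j = 0
        · simp only [hj, if_pos rfl, hj', if_neg]
          exact hord 0 (j'+1) (by omega) (by omega)
        · simp only [hj, hj', if_neg]
          exact hord (j+1) (j'+1) (by omega) (by omega)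
      · intro j hj
        by_cases hj0 : j = 0
        · simp [hj0]; exact le_of_lt hV0
        · have hlt : v (j+1) < v 1 := hord 1 (j+1) (by omega) (by omega)
          have hle : v (j+1) < ξ := lt_of_lt_of_le hlt hξmem.1
          have h := hsign (j+1) (by omega)
          have hWev : W.eval (v (j+1)) = (v (j+1) - ξ) * V.eval (v (j+1)) := by
            rw [hV]; simp [Polynomial.eval_mul]
          rw [hWev] at h
          have hpow : ((-1:ℝ))^(j+1) = -((-1:ℝ))^j := by ring
          rw [hpow] at h
          have target : 0 ≤ (-1:ℝ)^j * V.eval (v (j+1)) := by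
            nlinarith [h, hle, sq_nonneg ((-1:ℝ)^j), pow_mul_pow_eq_one j (show ((-1:ℝ))*(-1) = 1 by ring)]
          simpa [hj0] using target
      · simp; exact hV0
    omega


lemma last_point {θ : ℝ → ℝ} {γ β : ℝ} (hc : Continuous θ)
    (htop : Tendsto θ atTop (nhds γ)) (hbot : Tendsto θ atBot (nhds β))
    {y : ℝ} (h1 : β < y) (h2 : y < γ) :
    ∃ u, θ u = y ∧ ∀ w, u < w → y < θ w := by
  -- eventually above y at top
  have hev : ∀ᶠ w in atTop, y < θ w := htop.eventually (eventually_gt_nhds h2)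
  obtain ⟨B, hB⟩ := hev.exists_forall_of_atTop
  have hev2 : ∀ᶠ w in atBot, θ w < y := hbot.eventually (eventually_lt_nhds h1)
  obtain ⟨B2, hB2⟩ := hev2.exists_forall_of_atBot
  -- a point where θ = y
  have hne : ∃ w, θ w = y := by
    have hlow : θ (min B2 (B-1)) < y := hB2 _ (min_le_left _ _)
    have hhigh : y < θ (max B (B2+1)) := hB _ (le_max_left _ _)
    have hle : min B2 (B-1) ≤ max B (B2+1) :=
      le_trans (min_le_right _ _) (le_trans (by linarith) (le_max_left _ _))
    have := intermediate_value_Icc hle hc.continuousOn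
    have hy : y ∈ Set.Icc (θ (min B2 (B-1))) (θ (max B (B2+1))) := ⟨le_of_lt hlow, le_of_lt hhigh⟩
    obtain ⟨w, _, hw⟩ := this hy
    exact ⟨w, hw⟩
  set A := {w : ℝ | θ w = y} with hA
  have hAne : A.Nonempty := hne
  have hAcl : IsClosed A := isClosed_eq hc continuous_const
  have hAbdd : BddAbove A := by
    refine ⟨B, fun w hw => ?_⟩
    by_contra hcon
    push_neg at hcon
    have := hB w (le_of_lt hcon)
    rw [Set.mem_setOf_eq.mp hw] at this
    exact lt_irrefl _ this
  have hmem : sSup A ∈ A := hAcl.csSup_mem hAne hAbdd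
  refine ⟨sSup A, hmem, fun w hw => ?_⟩
  by_contra hcon
  push_neg at hcon
  rcases lt_or_eq_of_le hcon with hlt | heq
  · -- θ w < y : IVT between w and max point gives another crossing > sSup A
    have hhigh : y < θ (max B (w+1)) := hB _ (le_max_left _ _)
    have hle : w ≤ max B (w+1) := le_trans (by linarith) (le_max_right _ _)
    obtain ⟨w', hw'mem, hw'⟩ := intermediate_value_Icc hle hc.continuousOn
      ⟨le_of_lt hlt, le_of_lt hhigh⟩
    have : w' ≤ sSup A := le_csSup hAbdd hw'
    linarith [hw'mem.1]
  · have hwA : w ∈ A := by simpa [hA] using heq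
    have : w ≤ sSup A := le_csSup hAbdd hwA
    linarith


noncomputable def alphaFn (r : ℂ) (w : ℝ) : ℝ :=
  if 0 < r.im then Real.arctan ((w - r.re)/r.im) - π/2 else Real.arctan ((w - r.re)/r.im) + π/2

lemma alphaFn_cont (r : ℂ) : Continuous (alphaFn r) := by
  unfold alphaFn
  by_cases h : 0 < r.im <;> simp only [h, if_true, if_false]
  · exact (Real.continuous_arctan.comp (by fun_prop)).sub continuous_const
  · exact (Real.continuous_arctan.comp (by fun_prop)).add continuous_const

lemma alphaFn_polar (r : ℂ) (hr : r.im ≠ 0) (w : ℝ) :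
    ((w:ℂ) - r) = (‖((w:ℂ) - r)‖ : ℝ) * Complex.exp ((alphaFn r w : ℝ) * I) := by
  have habs : ‖((w:ℂ) - r)‖ = Real.sqrt ((w - r.re)^2 + r.im^2) := by
    rw [Complex.norm_def, Complex.normSq_apply]
    simp [Complex.sub_re, Complex.sub_im, Complex.ofReal_re, Complex.ofReal_im]
    ring_nf
  set u := (w - r.re)/r.im with hu
  have hsq : Real.sqrt (1 + u^2) > 0 := Real.sqrt_pos.mpr (by positivity)
  have hkey : (w - r.re)^2 + r.im^2 = r.im^2 * (1 + u^2) := by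
    rw [hu]
    field_simp
    ring
  rw [Complex.exp_mul_I]
  apply Complex.ext <;>
    simp [Complex.add_re, Complex.add_im, Complex.mul_re, Complex.mul_im,
      Complex.ofReal_re, Complex.ofReal_im, Complex.I_re, Complex.I_im,
      Complex.sub_re, Complex.sub_im]
  case _ => -- real part : w - r.re = abs * cos(alpha)
    rw [habs, Complex.cos_ofReal_re]
    unfold alphaFn
    rw [← hu]
    by_cases h : 0 < r.im
    · rw [if_pos h]
      have : Real.cos (Real.arctan u - π/2) = Real.sin (Real.arctan u) := by
        rw [Real.cos_sub]; simp
      rw [this, Real.sin_arctan]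
      rw [hkey, Real.sqrt_mul (sq_nonneg r.im), Real.sqrt_sq_eq_abs, abs_of_pos h]
      field_simp [hu]
      rw [hu]; field_simp
    · rw [if_neg h]
      have him : r.im < 0 := lt_of_le_of_ne (not_lt.mp h) hr
      have : Real.cos (Real.arctan u + π/2) = -Real.sin (Real.arctan u) := by
        rw [Real.cos_add]; simp
      rw [this, Real.sin_arctan]
      rw [hkey, Real.sqrt_mul (sq_nonneg r.im), Real.sqrt_sq_eq_abs, abs_of_neg him]
      field_simp [hu]
      rw [hu]; field_simp
  case _ => -- imaginary part : -r.im = abs * sin(alpha)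
    rw [habs, Complex.sin_ofReal_re]
    unfold alphaFn
    rw [← hu]
    by_cases h : 0 < r.im
    · rw [if_pos h]
      have : Real.sin (Real.arctan u - π/2) = -Real.cos (Real.arctan u) := by
        rw [Real.sin_sub]; simp
      rw [this, Real.cos_arctan]
      rw [hkey, Real.sqrt_mul (sq_nonneg r.im), Real.sqrt_sq_eq_abs, abs_of_pos h]
      field_simp
    · rw [if_neg h]
      have him : r.im < 0 := lt_of_le_of_ne (not_lt.mp h) hr
      have : Real.sin (Real.arctan u + π/2) = Real.cos (Real.arctan u) := by
        rw [Real.sin_add]; simp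
      rw [this, Real.cos_arctan]
      rw [hkey, Real.sqrt_mul (sq_nonneg r.im), Real.sqrt_sq_eq_abs, abs_of_neg him]
      field_simp

lemma alphaFn_tendsto_atTop (r : ℂ) (hr : r.im ≠ 0) :
    Tendsto (alphaFn r) atTop (nhds 0) := by
  have harctan_top : Tendsto Real.arctan atTop (nhds (π/2)) :=
    Real.tendsto_arctan_atTop.mono_right nhdsWithin_le_nhds
  have harctan_bot : Tendsto Real.arctan atBot (nhds (-(π/2))) :=
    Real.tendsto_arctan_atBot.mono_right nhdsWithin_le_nhds
  unfold alphaFn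
  by_cases h : 0 < r.im
  · simp only [h, if_true]
    have hin : Tendsto (fun w => (w - r.re)/r.im) atTop atTop := by
      apply Tendsto.atTop_div_const h
      exact tendsto_atTop_add_const_right _ _ tendsto_id
    have := (harctan_top.comp hin).sub_const (π/2)
    simpa using this
  · simp only [h, if_false]
    have him : r.im < 0 := lt_of_le_of_ne (not_lt.mp h) hr
    have hin : Tendsto (fun w => (w - r.re)/r.im) atTop atBot := by
      have h1 : Tendsto (fun w : ℝ => (w - r.re)/(-r.im)) atTop atTop :=
        Tendsto.atTop_div_const (by linarith) (tendsto_atTop_add_const_right _ _ tendsto_id)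
      have h2 := tendsto_neg_atTop_atBot.comp h1
      refine h2.congr (fun w => ?_)
      simp only [Function.comp_apply]
      rw [div_neg, neg_neg]
    have := (harctan_bot.comp hin).add_const (π/2)
    simpa using this

lemma alphaFn_tendsto_atBot (r : ℂ) (hr : r.im ≠ 0) :
    Tendsto (alphaFn r) atBot (nhds (if 0 < r.im then -π else π)) := by
  have harctan_top : Tendsto Real.arctan atTop (nhds (π/2)) :=
    Real.tendsto_arctan_atTop.mono_right nhdsWithin_le_nhds
  have harctan_bot : Tendsto Real.arctan atBot (nhds (-(π/2))) :=
    Real.tendsto_arctan_atBot.mono_right nhdsWithin_le_nhds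
  unfold alphaFn
  by_cases h : 0 < r.im
  · simp only [h, if_true]
    have hin : Tendsto (fun w => (w - r.re)/r.im) atBot atBot := by
      apply Tendsto.atBot_div_const h
      exact tendsto_atBot_add_const_right _ _ tendsto_id
    have := (harctan_bot.comp hin).sub_const (π/2)
    refine this.congr' (by rfl) |>.mono_right (le_of_eq ?_)
    congr 1
    ring
  · simp only [h, if_false]
    have him : r.im < 0 := lt_of_le_of_ne (not_lt.mp h) hr
    have hin : Tendsto (fun w => (w - r.re)/r.im) atBot atTop := by
      have h1 : Tendsto (fun w : ℝ => (w - r.re)/(-r.im)) atBot atBot :=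
        Tendsto.atBot_div_const (by linarith) (tendsto_atBot_add_const_right _ _ tendsto_id)
      have h2 := tendsto_neg_atBot_atTop.comp h1
      refine h2.congr (fun w => ?_)
      simp only [Function.comp_apply]
      rw [div_neg, neg_neg]
    have := (harctan_top.comp hin).add_const (π/2)
    refine this.mono_right (le_of_eq ?_)
    congr 1
    ring

noncomputable def thetaSum (s : Multiset ℂ) (w : ℝ) : ℝ :=
  (s.map (fun r => alphaFn r w)).sum

lemma thetaSum_cont (s : Multiset ℂ) : Continuous (thetaSum s) := by
  induction s using Multiset.induction_on with
  | empty =>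
    have h0 : thetaSum 0 = fun _ => 0 := by funext w; simp [thetaSum]
    rw [h0]; exact continuous_const
  | cons a s ih =>
    have : thetaSum (a ::ₘ s) = fun w => alphaFn a w + thetaSum s w := by
      funext w; simp [thetaSum]
    rw [this]
    exact (alphaFn_cont a).add ih

lemma thetaSum_polar (s : Multiset ℂ) (hs : ∀ r ∈ s, r.im ≠ 0) (w : ℝ) :
    (s.map (fun r => (w:ℂ) - r)).prod
      = ((s.map (fun r => ‖((w:ℂ) - r)‖)).prod : ℝ)
        * Complex.exp ((thetaSum s w : ℝ) * I) := by
  induction s using Multiset.induction_on with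
  | empty => simp [thetaSum]
  | cons a s ih =>
    have ha : a.im ≠ 0 := hs a (Multiset.mem_cons_self a s)
    have hs' : ∀ r ∈ s, r.im ≠ 0 := fun r hr => hs r (Multiset.mem_cons_of_mem hr)
    have hth : thetaSum (a ::ₘ s) w = alphaFn a w + thetaSum s w := by simp [thetaSum]
    simp only [Multiset.map_cons, Multiset.prod_cons, ih hs', hth]
    push_cast
    rw [add_mul, Complex.exp_add]
    conv_lhs => rw [alphaFn_polar a ha w]
    ring

lemma thetaSum_tendsto_atTop (s : Multiset ℂ) (hs : ∀ r ∈ s, r.im ≠ 0) :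
    Tendsto (thetaSum s) atTop (nhds 0) := by
  induction s using Multiset.induction_on with
  | empty =>
    have h0 : thetaSum 0 = fun _ => 0 := by funext w; simp [thetaSum]
    rw [h0]; simpa using tendsto_const_nhds
  | cons a s ih =>
    have ha : a.im ≠ 0 := hs a (Multiset.mem_cons_self a s)
    have hs' : ∀ r ∈ s, r.im ≠ 0 := fun r hr => hs r (Multiset.mem_cons_of_mem hr)
    have : thetaSum (a ::ₘ s) = fun w => alphaFn a w + thetaSum s w := by
      funext w; simp [thetaSum]
    rw [this]
    simpa using (alphaFn_tendsto_atTop a ha).add (ih hs')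

lemma thetaSum_tendsto_atBot (s : Multiset ℂ) (hs : ∀ r ∈ s, r.im ≠ 0) :
    Tendsto (thetaSum s) atBot
      (nhds ((s.map (fun r => if 0 < r.im then -π else π)).sum)) := by
  induction s using Multiset.induction_on with
  | empty =>
    have h0 : thetaSum 0 = fun _ => 0 := by funext w; simp [thetaSum]
    rw [h0]; simpa using tendsto_const_nhds
  | cons a s ih =>
    have ha : a.im ≠ 0 := hs a (Multiset.mem_cons_self a s)
    have hs' : ∀ r ∈ s, r.im ≠ 0 := fun r hr => hs r (Multiset.mem_cons_of_mem hr)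
    have heq : thetaSum (a ::ₘ s) = fun w => alphaFn a w + thetaSum s w := by
      funext w; simp [thetaSum]
    rw [heq]
    simpa [Multiset.map_cons, Multiset.sum_cons] using
      (alphaFn_tendsto_atBot a ha).add (ih hs')

lemma msum_const {s : Multiset ℂ} {f : ℂ → ℝ} {c : ℝ} (h : ∀ x ∈ s, f x = c) :
    (s.map f).sum = (Multiset.card s : ℝ) * c := by
  induction s using Multiset.induction_on with
  | empty => simp
  | cons a s ih =>
    have := h a (Multiset.mem_cons_self a s)
    simp only [Multiset.map_cons, Multiset.sum_cons, this,
      ih (fun x hx => h x (Multiset.mem_cons_of_mem hx)), Multiset.card_cons]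
    push_cast
    ring

lemma multiset_exists_ub (s : Multiset ℝ) : ∃ B : ℝ, ∀ x ∈ s, x < B := by
  induction s using Multiset.induction_on with
  | empty => exact ⟨0, by simp⟩
  | cons a s ih =>
    obtain ⟨B, hB⟩ := ih
    refine ⟨max B (a+1), fun x hx => ?_⟩
    rcases Multiset.mem_cons.mp hx with h | h
    · rw [h]; exact lt_of_lt_of_le (by linarith) (le_max_right _ _)
    · exact lt_of_lt_of_le (hB x h) (le_max_left _ _)


lemma T_eval (n : ℕ) (a : ℕ → ℝ) (w : ℝ) :
    (∑ j ∈ Finset.Icc 1 n, Polynomial.C ((a j : ℂ))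
        * (Polynomial.C Complex.I * Polynomial.X + Polynomial.C 1)^(n+j)
        * (Polynomial.C (-Complex.I) * Polynomial.X + Polynomial.C 1)^(n-j)).eval (w:ℂ)
    = ((1+w^2:ℝ):ℂ)^n *
      (↑(∑ j ∈ Finset.Icc 1 n, a j * Real.cos (j * (2*Real.arctan w)))
        + ↑(∑ j ∈ Finset.Icc 1 n, a j * Real.sin (j * (2*Real.arctan w))) * Complex.I) := by
  set t := 2 * Real.arctan w with ht
  set A := ((1+w^2:ℝ):ℂ) with hA
  have hE : ((1:ℂ) + Complex.I*w)^2 = A * Complex.exp ((t:ℝ) * Complex.I) := by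
    rw [Complex.exp_mul_I, ht]
    rw [show ((2*Real.arctan w : ℝ):ℂ) = ((2*Real.arctan w : ℝ):ℝ) from rfl]
    rw [← Complex.ofReal_cos, ← Complex.ofReal_sin]
    have hcos : Real.cos (2*Real.arctan w) = (1 - w^2)/(1+w^2) := by
      rw [Real.cos_two_mul, Real.cos_sq_arctan]
      have : (1:ℝ) + w^2 > 0 := by positivity
      field_simp
      ring
    have hsin : Real.sin (2*Real.arctan w) = 2*w/(1+w^2) := by
      rw [Real.sin_two_mul, Real.sin_arctan, Real.cos_arctan]
      have h1 : Real.sqrt (1 + w^2) > 0 := Real.sqrt_pos.mpr (by positivity)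
      have h2 : Real.sqrt (1 + w^2) * Real.sqrt (1 + w^2) = 1 + w^2 :=
        Real.mul_self_sqrt (by positivity)
      field_simp
      rw [Real.sq_sqrt (by positivity)]
    rw [hcos, hsin, hA]
    have hw : ((1+w^2:ℝ):ℂ) ≠ 0 := by
      have : (0:ℝ) < 1 + w^2 := by positivity
      exact_mod_cast ne_of_gt this
    push_cast
    push_cast at hw
    field_simp
    linear_combination ((w:ℂ)^2) * Complex.I_sq
  have hA1 : ((1:ℂ) + Complex.I*w) * (1 - Complex.I*w) = A := by
    rw [hA]
    push_cast
    linear_combination (-(w:ℂ)^2) * Complex.I_sq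
  trans (∑ j ∈ Finset.Icc 1 n, A^n * (↑(a j) * Complex.exp (((j:ℝ)*t : ℝ) * Complex.I)))
  · rw [Polynomial.eval_finset_sum]
    apply Finset.sum_congr rfl
    intro j hj
    have hjn : j ≤ n := (Finset.mem_Icc.mp hj).2
    have hj1 : 1 ≤ j := (Finset.mem_Icc.mp hj).1
    simp only [Polynomial.eval_mul, Polynomial.eval_pow, Polynomial.eval_add,
      Polynomial.eval_C, Polynomial.eval_X, Polynomial.eval_one]
    have e1 : Complex.I * (w:ℂ) + 1 = 1 + Complex.I*w := by ring
    have e2 : -Complex.I * (w:ℂ) + 1 = 1 - Complex.I*w := by ring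
    rw [e1, e2]
    have hsplit : n + j = 2*j + (n - j) := by omega
    have hexpj : Complex.exp (((t:ℝ)) * Complex.I)^j = Complex.exp (((j:ℝ)*t : ℝ) * Complex.I) := by
      rw [← Complex.exp_nat_mul]
      congr 1
      push_cast
      ring
    have hApow : (A:ℂ)^j * A^(n-j) = A^n := by
      rw [← pow_add]
      congr 1
      omega
    have hfin : ((1:ℂ) + Complex.I*w)^(n-j) * (1 - Complex.I*w)^(n-j) = A^(n-j) := by
      rw [← mul_pow, hA1]
    rw [hsplit, pow_add, pow_mul, hE, mul_pow, hexpj]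
    rw [show (a j : ℂ) * (A ^ j * Complex.exp ((((j:ℝ)*t:ℝ)) * Complex.I) * ((1:ℂ) + Complex.I*w) ^ (n - j)) * ((1:ℂ) - Complex.I*w) ^ (n - j)
        = (a j : ℂ) * (A ^ j * Complex.exp ((((j:ℝ)*t:ℝ)) * Complex.I)) * (((1:ℂ) + Complex.I*w) ^ (n - j) * ((1:ℂ) - Complex.I*w) ^ (n-j)) from by ring,
      hfin, ← hApow]
    ring
  · rw [← Finset.mul_sum]
    congr 1
    push_cast
    rw [Finset.sum_mul, ← Finset.sum_add_distrib]
    apply Finset.sum_congr rfl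
    intro j hj
    rw [Complex.exp_mul_I]
    rw [show ((j:ℂ) * (t:ℂ)) = (((j:ℝ)*t:ℝ):ℂ) by push_cast; ring]
    rw [← Complex.ofReal_cos, ← Complex.ofReal_sin]
    push_cast
    ring


lemma T_coeff (n : ℕ) (hn : 1 ≤ n) (a : ℕ → ℝ) :
    (∑ j ∈ Finset.Icc 1 n, Polynomial.C ((a j : ℂ))
        * (Polynomial.C Complex.I * Polynomial.X + Polynomial.C 1)^(n+j)
        * (Polynomial.C (-Complex.I) * Polynomial.X + Polynomial.C 1)^(n-j)).coeff (2*n)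
    = ((∑ j ∈ Finset.Icc 1 n, a j * (-1:ℝ)^j : ℝ) : ℂ) := by
  rw [Polynomial.finset_sum_coeff]
  push_cast
  apply Finset.sum_congr rfl
  intro j hj
  have hj1 : 1 ≤ j := (Finset.mem_Icc.mp hj).1
  have hjn : j ≤ n := (Finset.mem_Icc.mp hj).2
  have hd1 : ((Polynomial.C Complex.I * Polynomial.X + Polynomial.C 1 : ℂ[X])^(n+j)).natDegree = n + j := by
    rw [Polynomial.natDegree_pow, Polynomial.natDegree_linear Complex.I_ne_zero]
    ring
  have hd2 : ((Polynomial.C (-Complex.I) * Polynomial.X + Polynomial.C 1 : ℂ[X])^(n-j)).natDegree = n - j := by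
    rw [Polynomial.natDegree_pow, Polynomial.natDegree_linear (neg_ne_zero.mpr Complex.I_ne_zero)]
    ring
  rw [mul_assoc, Polynomial.coeff_C_mul]
  have hkey := Polynomial.coeff_mul_degree_add_degree
    ((Polynomial.C Complex.I * Polynomial.X + Polynomial.C 1 : ℂ[X])^(n+j))
    ((Polynomial.C (-Complex.I) * Polynomial.X + Polynomial.C 1 : ℂ[X])^(n-j))
  rw [hd1, hd2] at hkey
  rw [show 2*n = (n+j) + (n-j) by omega, hkey]
  rw [Polynomial.leadingCoeff_pow, Polynomial.leadingCoeff_pow]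
  have hl1 : (Polynomial.C Complex.I * Polynomial.X + Polynomial.C 1 : ℂ[X]).leadingCoeff = Complex.I := by
    rw [show (Polynomial.C 1 : ℂ[X]) = Polynomial.C ((1:ℂ)) from rfl]
    exact Polynomial.leadingCoeff_linear Complex.I_ne_zero
  have hl2 : (Polynomial.C (-Complex.I) * Polynomial.X + Polynomial.C 1 : ℂ[X]).leadingCoeff = -Complex.I :=
    Polynomial.leadingCoeff_linear (neg_ne_zero.mpr Complex.I_ne_zero)
  rw [hl1, hl2]
  have hpow : Complex.I^(n+j) * (-Complex.I)^(n-j) = (-1:ℂ)^j := by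
    rw [neg_pow, ← mul_assoc]
    rw [mul_comm (Complex.I^(n+j)) ((-1:ℂ)^(n-j)), mul_assoc, ← pow_add]
    rw [show (n+j) + (n-j) = 2*n by omega, pow_mul, Complex.I_sq]
    rw [← pow_add]
    rw [show (n-j) + n = j + 2*(n-j) by omega, pow_add, pow_mul]
    norm_num
  rw [hpow]


noncomputable def Tpoly (n : ℕ) (a : ℕ → ℝ) : Polynomial ℂ :=
  ∑ j ∈ Finset.Icc 1 n, Polynomial.C ((a j : ℂ))
      * (Polynomial.C Complex.I * Polynomial.X + Polynomial.C 1)^(n+j)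
      * (Polynomial.C (-Complex.I) * Polynomial.X + Polynomial.C 1)^(n-j)

lemma Tpoly_eval_zero (n : ℕ) (a : ℕ → ℝ) (ha : ∑ j ∈ Finset.Icc 1 n, a j = 1) :
    (Tpoly n a).eval 0 = 1 := by
  unfold Tpoly
  rw [Polynomial.eval_finset_sum]
  have : ∀ j ∈ Finset.Icc 1 n,
      (Polynomial.C ((a j : ℂ)) * (Polynomial.C Complex.I * Polynomial.X + Polynomial.C 1)^(n+j)
        * (Polynomial.C (-Complex.I) * Polynomial.X + Polynomial.C 1)^(n-j)).eval 0 = ((a j : ℝ) : ℂ) := by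
    intro j hj
    simp
  rw [Finset.sum_congr rfl this]
  rw [← Complex.ofReal_sum, ha, Complex.ofReal_one]

lemma Tpoly_ne_zero (n : ℕ) (a : ℕ → ℝ) (ha : ∑ j ∈ Finset.Icc 1 n, a j = 1) :
    Tpoly n a ≠ 0 := by
  intro h
  have := Tpoly_eval_zero n a ha
  rw [h] at this
  simp at this

lemma Tpoly_deg_le (n : ℕ) (a : ℕ → ℝ) : (Tpoly n a).natDegree ≤ 2*n := by
  unfold Tpoly
  apply le_trans (Polynomial.natDegree_sum_le _ _)
  refine (Finset.fold_max_le (2*n)).mpr ⟨by omega, ?_⟩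
  · intro j hj
    have hjn : j ≤ n := (Finset.mem_Icc.mp hj).2
    simp only [Function.comp_apply]
    calc (Polynomial.C ((a j : ℂ)) * (Polynomial.C Complex.I * Polynomial.X + Polynomial.C 1)^(n+j)
          * (Polynomial.C (-Complex.I) * Polynomial.X + Polynomial.C 1)^(n-j)).natDegree
        ≤ (Polynomial.C ((a j : ℂ)) * (Polynomial.C Complex.I * Polynomial.X + Polynomial.C 1)^(n+j)).natDegree
          + ((Polynomial.C (-Complex.I) * Polynomial.X + Polynomial.C 1 : ℂ[X])^(n-j)).natDegree :=
          Polynomial.natDegree_mul_le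
      _ ≤ ((Polynomial.C ((a j : ℂ))).natDegree
            + ((Polynomial.C Complex.I * Polynomial.X + Polynomial.C 1 : ℂ[X])^(n+j)).natDegree)
          + ((Polynomial.C (-Complex.I) * Polynomial.X + Polynomial.C 1 : ℂ[X])^(n-j)).natDegree := by
          exact Nat.add_le_add_right Polynomial.natDegree_mul_le _
      _ ≤ (0 + (n+j) * 1) + (n-j) * 1 := by
          apply Nat.add_le_add
          apply Nat.add_le_add
          · simp [Polynomial.natDegree_C]
          · exact le_trans (Polynomial.natDegree_pow_le)
              (Nat.mul_le_mul_left _ (Polynomial.natDegree_linear_le))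
          · exact le_trans (Polynomial.natDegree_pow_le)
              (Nat.mul_le_mul_left _ (Polynomial.natDegree_linear_le))
      _ ≤ 2*n := by omega

lemma Tpoly_dvd (n : ℕ) (a : ℕ → ℝ) :
    (Polynomial.X - Polynomial.C Complex.I)^(n+1) ∣ Tpoly n a := by
  unfold Tpoly
  apply Finset.dvd_sum
  intro j hj
  have hj1 : 1 ≤ j := (Finset.mem_Icc.mp hj).1
  have hP1 : (Polynomial.C Complex.I * Polynomial.X + Polynomial.C 1 : ℂ[X])
      = Polynomial.C Complex.I * (Polynomial.X - Polynomial.C Complex.I) := by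
    rw [mul_sub, ← Polynomial.C_mul, Complex.I_mul_I]
    ring_nf
    rw [Polynomial.C_neg]
    ring
  rw [hP1, mul_pow]
  exact (((pow_dvd_pow (Polynomial.X - Polynomial.C Complex.I) (by omega : n+1 ≤ n+j)).mul_left
    _).mul_left _).mul_right _


lemma msum_const_nat {α : Type*} (s : Multiset α) {f : α → ℕ} {c : ℕ}
    (h : ∀ x ∈ s, f x = c) : (s.map f).sum = Multiset.card s * c := by
  induction s using Multiset.induction_on with
  | empty => simp
  | cons a s ih =>
    have h1 := h a (Multiset.mem_cons_self a s)
    simp only [Multiset.map_cons, Multiset.sum_cons, h1,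
      ih (fun x hx => h x (Multiset.mem_cons_of_mem hx)), Multiset.card_cons]
    ring

lemma cos_nat_mul_pi (j : ℕ) : Real.cos (j * π) = (-1:ℝ)^j := by
  induction j with
  | zero => simp
  | succ k ih =>
    rw [show ((k+1:ℕ):ℝ) * π = k*π + π by push_cast; ring]
    rw [Real.cos_add_pi, ih]
    ring

lemma Tpoly_eval (n : ℕ) (a : ℕ → ℝ) (w : ℝ) :
    (Tpoly n a).eval (w:ℂ)
    = ((1+w^2:ℝ):ℂ)^n *
      (↑(∑ j ∈ Finset.Icc 1 n, a j * Real.cos (j * (2*Real.arctan w)))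
        + ↑(∑ j ∈ Finset.Icc 1 n, a j * Real.sin (j * (2*Real.arctan w))) * Complex.I) := by
  unfold Tpoly; exact T_eval n a w

lemma Tpoly_coeff (n : ℕ) (hn : 1 ≤ n) (a : ℕ → ℝ) :
    (Tpoly n a).coeff (2*n) = ((∑ j ∈ Finset.Icc 1 n, a j * (-1:ℝ)^j : ℝ) : ℂ) := by
  unfold Tpoly; exact T_coeff n hn a
set_option maxHeartbeats 1000000 in
theorem stmt_0 (n : ℕ) (hn : 1 ≤ n) (a : ℕ → ℝ)
    (ha : ∑ j ∈ Finset.Icc 1 n, a j = 1) :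
    ∃ t ∈ Set.Icc (0:ℝ) Real.pi,
      (∑ j ∈ Finset.Icc 1 n, a j * Real.sin (j * t)) = 0 ∧
      (∑ j ∈ Finset.Icc 1 n, a j * Real.cos (j * t)) < 0 := by
  classical
  by_contra hcon
  push_neg at hcon
  -- hcon : ∀ t ∈ Set.Icc 0 π, sumS t = 0 → 0 ≤ sumC t
  have hyp2 : ∀ t : ℝ, -π < t → t < π →
      (∑ j ∈ Finset.Icc 1 n, a j * Real.sin (j * t)) = 0 →
      0 ≤ ∑ j ∈ Finset.Icc 1 n, a j * Real.cos (j * t) := by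
    intro t h1 h2 hS
    rcases le_or_gt 0 t with h0 | h0
    · exact hcon t ⟨h0, le_of_lt h2⟩ hS
    · have hSneg : (∑ j ∈ Finset.Icc 1 n, a j * Real.sin (j * (-t))) = 0 := by
        have hc : ∀ j ∈ Finset.Icc 1 n,
            a j * Real.sin (j * (-t)) = -(a j * Real.sin (j * t)) := by
          intro j _; rw [mul_neg, Real.sin_neg]; ring
        rw [Finset.sum_congr rfl hc, Finset.sum_neg_distrib, hS, neg_zero]
      have hCeq : (∑ j ∈ Finset.Icc 1 n, a j * Real.cos (j * (-t)))
          = ∑ j ∈ Finset.Icc 1 n, a j * Real.cos (j * t) := by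
        apply Finset.sum_congr rfl; intro j _; rw [mul_neg, Real.cos_neg]
      have := hcon (-t) ⟨by linarith, by linarith⟩ hSneg
      rwa [hCeq] at this
  set T := Tpoly n a with hT
  have hTne : T ≠ 0 := Tpoly_ne_zero n a ha
  have hyp' : ∀ w : ℝ, (T.eval (w:ℂ)).im = 0 → 0 ≤ (T.eval (w:ℂ)).re := by
    intro w him
    have hev := Tpoly_eval n a w
    rw [← hT] at hev
    rw [← Complex.ofReal_pow] at hev
    set Pv : ℝ := (1+w^2)^n with hPvdef
    set t := 2 * Real.arctan w with htdef
    have ht1 : -π < t := by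
      have := Real.neg_pi_div_two_lt_arctan w; rw [htdef]; linarith
    have ht2 : t < π := by
      have := Real.arctan_lt_pi_div_two w; rw [htdef]; linarith
    set cv := ∑ j ∈ Finset.Icc 1 n, a j * Real.cos (j * t) with hcv
    set sv := ∑ j ∈ Finset.Icc 1 n, a j * Real.sin (j * t) with hsv
    have him2 : (T.eval (w:ℂ)).im = Pv * sv := by
      rw [hev]
      simp [Complex.mul_im, Complex.add_im, Complex.add_re, Complex.mul_re]
    have hre2 : (T.eval (w:ℂ)).re = Pv * cv := by
      rw [hev]
      simp [Complex.mul_im, Complex.add_im, Complex.add_re, Complex.mul_re]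
    have hPn : (0:ℝ) < Pv := by rw [hPvdef]; positivity
    have hsv0 : sv = 0 := by
      rw [him2] at him
      rcases mul_eq_zero.mp him with h | h
      · exact absurd h (ne_of_gt hPn)
      · exact h
    have hcv0 : 0 ≤ cv := hyp2 t ht1 ht2 hsv0
    rw [hre2]
    positivity
  -- roots machinery
  have hsplits := IsAlgClosed.splits T
  have hfact : T = Polynomial.C T.leadingCoeff
      * (T.roots.map (fun r => Polynomial.X - Polynomial.C r)).prod :=
    hsplits.eq_prod_roots
  have hcardroots : Multiset.card T.roots = T.natDegree :=
    Polynomial.splits_iff_card_roots.mp hsplits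
  set c := T.leadingCoeff with hc
  have hc0 : c ≠ 0 := Polynomial.leadingCoeff_ne_zero.mpr hTne
  set γ := Complex.arg c with hγ
  set mR := T.roots.filter (fun r => r.im = 0) with hmR
  set mN := T.roots.filter (fun r => ¬ r.im = 0) with hmN
  have hRN : mR + mN = T.roots := Multiset.filter_add_not _ _
  have hmNim : ∀ r ∈ mN, r.im ≠ 0 := fun r hr => (Multiset.mem_filter.mp hr).2
  have hmRim : ∀ r ∈ mR, r.im = 0 := fun r hr => (Multiset.mem_filter.mp hr).2
  set p := Multiset.card (mN.filter (fun r => 0 < r.im)) with hpdef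
  set q := Multiset.card (mN.filter (fun r => ¬ 0 < r.im)) with hqdef
  set ρ := Multiset.card mR with hρdef
  have hpq : p + q = Multiset.card mN := by
    rw [hpdef, hqdef, ← Multiset.card_add, Multiset.filter_add_not]
  have hcards : ρ + Multiset.card mN = T.natDegree := by
    rw [hρdef, ← hcardroots, ← hRN, Multiset.card_add]
  have hpn : n+1 ≤ p := by
    have hcount : n+1 ≤ T.roots.count Complex.I := by
      rw [Polynomial.count_roots, Polynomial.le_rootMultiplicity_iff hTne]
      rw [hT]; exact Tpoly_dvd n a
    have h1 : T.roots.count Complex.I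
        = Multiset.count Complex.I (mN.filter (fun r => 0 < r.im)) := by
      rw [hmN, Multiset.count_filter, Multiset.count_filter]
      simp [Complex.I_im]
    rw [h1] at hcount
    exact le_trans hcount (Multiset.count_le_card _ _)
  have hNle : T.natDegree ≤ 2*n := by rw [hT]; exact Tpoly_deg_le n a
  -- real-rooted part G
  set G : Polynomial ℝ := (mR.map (fun r => Polynomial.X - Polynomial.C r.re)).prod with hG
  have hGdeg : G.natDegree = ρ := by
    rw [hG, Polynomial.natDegree_multiset_prod]
    · rw [Multiset.map_map]
      rw [msum_const_nat mR (c := 1) (by intro x _; simp)]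
      omega
    · intro h0
      obtain ⟨r, _, heq⟩ := Multiset.mem_map.mp h0
      exact Polynomial.X_sub_C_ne_zero r.re heq
  have hGevalC : ∀ w : ℝ, ((G.eval w : ℝ) : ℂ) = (mR.map (fun r => (w:ℂ) - r)).prod := by
    intro w
    rw [hG, Polynomial.eval_multiset_prod, Multiset.map_map]
    have h2 : Multiset.map ((fun x => Polynomial.eval w x) ∘ fun r => Polynomial.X - Polynomial.C r.re) mR
        = Multiset.map (fun r => w - r.re) mR :=
      Multiset.map_congr rfl (by intro r _; simp)
    rw [h2]
    rw [show ((Multiset.map (fun r => w - r.re) mR).prod : ℂ)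
        = Complex.ofRealHom ((Multiset.map (fun r => w - r.re) mR).prod) from rfl]
    rw [map_multiset_prod, Multiset.map_map]
    apply congrArg
    apply Multiset.map_congr rfl
    intro r hr
    have hrre : (r.re : ℂ) = r := Complex.ext rfl (by simp [hmRim r hr])
    simp only [Function.comp_apply, Complex.ofRealHom_eq_coe]
    rw [Complex.ofReal_sub, hrre]
  -- polar decomposition
  set θ : ℝ → ℝ := fun w => γ + thetaSum mN w with hθdef
  set Pa : ℝ → ℝ := fun w => ‖c‖ * (mN.map (fun r => ‖((w:ℂ) - r)‖)).prod with hPadef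
  have hPapos : ∀ w : ℝ, 0 < Pa w := by
    intro w
    apply mul_pos (norm_pos_iff.mpr hc0)
    apply Multiset.prod_pos
    intro x hx
    obtain ⟨r, hr, rfl⟩ := Multiset.mem_map.mp hx
    apply norm_pos_iff.mpr
    intro h0
    have hwr : (w:ℂ) = r := sub_eq_zero.mp h0
    have : r.im = 0 := by rw [← hwr]; simp
    exact hmNim r hr this
  have hMain : ∀ w : ℝ, T.eval ↑w = ↑(Pa w) * ↑(G.eval w) * Complex.exp (↑(θ w) * Complex.I) := by
    intro w
    conv_lhs => rw [hfact]
    rw [Polynomial.eval_mul, Polynomial.eval_C, Polynomial.eval_multiset_prod, Multiset.map_map]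
    have h2 : Multiset.map ((fun x => Polynomial.eval (↑w:ℂ) x) ∘ fun r => Polynomial.X - Polynomial.C r) T.roots
        = Multiset.map (fun r => (↑w:ℂ) - r) T.roots :=
      Multiset.map_congr rfl (by intro r _; simp)
    rw [h2, ← hRN, Multiset.map_add, Multiset.prod_add]
    rw [thetaSum_polar mN hmNim w]
    rw [← hGevalC w]
    conv_lhs => rw [← Complex.norm_mul_exp_arg_mul_I c]
    rw [hPadef, hθdef]
    push_cast
    rw [add_mul, Complex.exp_add]
    ring
  have hθcont : Continuous θ := by
    rw [hθdef]; exact continuous_const.add (thetaSum_cont mN)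
  have hθtop : Tendsto θ atTop (nhds γ) := by
    have := tendsto_const_nhds (x := γ) (f := atTop (α := ℝ)) |>.add (thetaSum_tendsto_atTop mN hmNim)
    simpa using this
  set B : ℝ := (mN.map (fun r => if 0 < r.im then -π else π)).sum with hBdef
  have hθbot : Tendsto θ atBot (nhds (γ + B)) :=
    tendsto_const_nhds.add (thetaSum_tendsto_atBot mN hmNim)
  have hBval : B = -(p:ℝ)*π + (q:ℝ)*π := by
    rw [hBdef]
    conv_lhs => rw [← Multiset.filter_add_not (fun r => 0 < r.im) mN]
    rw [Multiset.map_add, Multiset.sum_add]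
    rw [msum_const (c := -π) (by intro x hx; rw [if_pos (Multiset.mem_filter.mp hx).2]),
      msum_const (c := π) (by intro x hx; rw [if_neg (Multiset.mem_filter.mp hx).2])]
    rw [← hpdef, ← hqdef]
    ring
  have hDlow : (ρ:ℝ) + 2 ≤ (p:ℝ) - q := by
    have h1 : ((p:ℝ) + q) + ρ = T.natDegree := by
      have : (p + q) + ρ = T.natDegree := by omega
      exact_mod_cast this
    have h2 : (n:ℝ) + 1 ≤ p := by exact_mod_cast hpn
    have h3 : (T.natDegree : ℝ) ≤ 2*n := by exact_mod_cast hNle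
    linarith
  have hγub : γ < ((p:ℝ) - q - ρ - 1)*π := by
    by_cases hN2 : T.natDegree = 2*n
    · have hcoeff : T.coeff (2*n) = ((∑ j ∈ Finset.Icc 1 n, a j * (-1:ℝ)^j : ℝ) : ℂ) := by
        rw [hT]; exact Tpoly_coeff n hn a
      have hceq : T.coeff (2*n) = c := by
        rw [hc, ← hN2]; exact Polynomial.coeff_natDegree
      set L := ∑ j ∈ Finset.Icc 1 n, a j * (-1:ℝ)^j with hL
      have hcL : c = (L:ℂ) := by rw [← hceq, hcoeff]
      have hSpi : (∑ j ∈ Finset.Icc 1 n, a j * Real.sin (j * π)) = 0 := by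
        apply Finset.sum_eq_zero; intro j _; rw [Real.sin_nat_mul_pi]; ring
      have hCpi : (∑ j ∈ Finset.Icc 1 n, a j * Real.cos (j * π)) = L := by
        rw [hL]; apply Finset.sum_congr rfl; intro j _; rw [_root_.cos_nat_mul_pi]
      have hL0 : 0 ≤ L := by
        rw [← hCpi]; exact hcon π ⟨le_of_lt pi_pos, le_refl π⟩ hSpi
      have hγ0 : γ = 0 := by rw [hγ, hcL]; exact Complex.arg_ofReal_of_nonneg hL0
      rw [hγ0]
      have h1 : (1:ℝ) ≤ (p:ℝ) - q - ρ - 1 := by linarith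
      nlinarith [pi_pos]
    · have hD3 : (ρ:ℝ) + 3 ≤ (p:ℝ) - q := by
        have h1 : ((p:ℝ) + q) + ρ = T.natDegree := by
          have : (p + q) + ρ = T.natDegree := by omega
          exact_mod_cast this
        have h2 : (n:ℝ) + 1 ≤ p := by exact_mod_cast hpn
        have h4 : T.natDegree + 1 ≤ 2*n := by omega
        have h3 : (T.natDegree : ℝ) + 1 ≤ 2*n := by exact_mod_cast h4
        linarith
      calc γ ≤ π := Complex.arg_le_pi c
        _ < 2*π := by linarith [pi_pos]
        _ ≤ ((p:ℝ)-q-ρ-1)*π := by nlinarith [pi_pos]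
  -- construct the points u j
  have hlast : ∀ j : ℕ, 1 ≤ j → j ≤ ρ+1 →
      ∃ u, θ u = -(j:ℝ)*π ∧ ∀ w, u < w → -(j:ℝ)*π < θ w := by
    intro j h1 h2
    have hj1 : (1:ℝ) ≤ (j:ℝ) := by exact_mod_cast h1
    have hj2 : (j:ℝ) ≤ (ρ:ℝ)+1 := by exact_mod_cast h2
    apply last_point hθcont hθtop hθbot
    · rw [hBval]
      nlinarith [pi_pos, hγub]
    · nlinarith [pi_pos, Complex.neg_pi_lt_arg c]
  have H : ∀ j : ℕ, ∃ u : ℝ, (1 ≤ j ∧ j ≤ ρ+1) →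
      (θ u = -(j:ℝ)*π ∧ ∀ w, u < w → -(j:ℝ)*π < θ w) := by
    intro j
    by_cases hj : 1 ≤ j ∧ j ≤ ρ+1
    · obtain ⟨u, hu⟩ := hlast j hj.1 hj.2; exact ⟨u, fun _ => hu⟩
    · exact ⟨0, fun h => absurd h hj⟩
  choose u hu using H
  have hord : ∀ j j' : ℕ, 1 ≤ j → j < j' → j' ≤ ρ+1 → u j' < u j := by
    intro j j' h1 h2 h3
    have huj := hu j ⟨h1, by omega⟩
    have huj' := hu j' ⟨by omega, h3⟩
    have hjj' : (j:ℝ) < (j':ℝ) := by exact_mod_cast h2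
    by_contra hnot
    push_neg at hnot
    rcases lt_or_eq_of_le hnot with hlt | heq
    · have hgt := huj.2 (u j') hlt
      rw [huj'.1] at hgt
      have hmul := mul_lt_mul_of_pos_right hjj' pi_pos
      linarith
    · have e1 := huj.1
      rw [heq, huj'.1] at e1
      have hmul := mul_lt_mul_of_pos_right hjj' pi_pos
      linarith
  have hsign : ∀ j : ℕ, 1 ≤ j → j ≤ ρ+1 → 0 ≤ (-1:ℝ)^j * G.eval (u j) := by
    intro j h1 h2
    have hθu : θ (u j) = -(j:ℝ)*π := (hu j ⟨h1, h2⟩).1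
    have hexp : Complex.exp (↑(θ (u j)) * Complex.I) = (((-1:ℝ)^j : ℝ) : ℂ) := by
      rw [hθu]
      rw [show ((-(j:ℝ)*π : ℝ) : ℂ) * Complex.I = (j:ℂ) * (((-π : ℝ):ℂ) * Complex.I) by
        push_cast; ring]
      rw [Complex.exp_nat_mul]
      have hme : Complex.exp (((-π:ℝ):ℂ) * Complex.I) = -1 := by
        rw [Complex.exp_mul_I, ← Complex.ofReal_cos, ← Complex.ofReal_sin]
        simp
      rw [hme]
      push_cast
      ring
    have hTu := hMain (u j)
    rw [hexp] at hTu
    rw [← Complex.ofReal_mul, ← Complex.ofReal_mul] at hTu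
    have hTim : (T.eval ↑(u j)).im = 0 := by rw [hTu]; exact Complex.ofReal_im _
    have hTre : (T.eval ↑(u j)).re = Pa (u j) * G.eval (u j) * (-1:ℝ)^j := by
      rw [hTu]; exact Complex.ofReal_re _
    have h0 := hyp' (u j) hTim
    rw [hTre] at h0
    have hpa := hPapos (u j)
    rw [mul_assoc] at h0
    have := (mul_nonneg_iff_of_pos_left hpa).mp h0
    linarith [this, mul_comm (G.eval (u j)) ((-1:ℝ)^j)]
  -- the positive endpoint M
  obtain ⟨B0, hB0⟩ := multiset_exists_ub (mR.map Complex.re)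
  set M := max B0 (u 1 + 1) with hM
  have hMG : 0 < G.eval M := by
    rw [hG, Polynomial.eval_multiset_prod, Multiset.map_map]
    apply Multiset.prod_pos
    intro x hx
    obtain ⟨r, hr, rfl⟩ := Multiset.mem_map.mp hx
    simp only [Function.comp_apply, Polynomial.eval_sub, Polynomial.eval_X, Polynomial.eval_C]
    have h1 : r.re < B0 := hB0 r.re (Multiset.mem_map_of_mem _ hr)
    have h2 : B0 ≤ M := le_max_left _ _
    linarith
  have hMu : u 1 < M := lt_of_lt_of_le (by linarith) (le_max_right _ _)
  -- final contradiction via the alternation lemma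
  have hfin : ρ + 1 ≤ G.natDegree := by
    apply alt_lemma (ρ+1) G (fun j => if j = 0 then M else u j)
    · intro j j' hjj' hj'm
      have hj' : j' ≠ 0 := by omega
      by_cases hj : j = 0
      · simp only [hj, if_pos rfl, hj', if_neg]
        rcases Nat.lt_or_ge 1 j' with h | h
        · exact lt_trans (hord 1 j' (le_refl 1) h hj'm) hMu
        · have : j' = 1 := by omega
          rw [this]; exact hMu
      · simp only [hj, hj', if_neg]
        exact hord j j' (by omega) hjj' hj'm
    · intro j hj
      by_cases hj0 : j = 0
      · simp only [hj0, if_pos rfl, pow_zero, one_mul]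
        exact le_of_lt hMG
      · simp only [hj0, if_neg]
        exact hsign j (by omega) hj
    · simp only [if_pos rfl]
      exact hMG
  rw [hGdeg] at hfin
  omega
end

section
/- Let S(t) = Σ_{j=1}^n a_j sin(jt) and suppose S(t_1) = 0 for some t_1 in the open interval (0,π). Then there exist unique real coefficients b_1,...,b_{n-1} such that S(t) = (cos t - cos t_1) · Σ_{j=1}^{n-1} b_j sin(jt) for all t. -/
open Real Finset

lemma hasDerivAt_sinsum (m : ℕ) (d : ℕ → ℝ) (t : ℝ) :
    HasDerivAt (fun t => ∑ j ∈ Icc 1 m, d j * Real.sin (j * t))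
      (∑ j ∈ Icc 1 m, d j * ((j : ℝ) * Real.cos (j * t))) t := by
  apply HasDerivAt.fun_sum
  intro j _
  have h1 : HasDerivAt (fun t : ℝ => (j : ℝ) * t) (j : ℝ) t := by
    simpa using (hasDerivAt_id t).const_mul (j : ℝ)
  have h2 := (Real.hasDerivAt_sin ((j : ℝ) * t)).comp t h1
  simpa [mul_comm] using h2.const_mul (d j)

lemma hasDerivAt_cossum (m : ℕ) (d : ℕ → ℝ) (t : ℝ) :
    HasDerivAt (fun t => ∑ j ∈ Icc 1 m, d j * ((j : ℝ) * Real.cos (j * t)))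
      (∑ j ∈ Icc 1 m, -(d j * ((j : ℝ) ^ 2 * Real.sin (j * t)))) t := by
  apply HasDerivAt.fun_sum
  intro j _
  have h1 : HasDerivAt (fun t : ℝ => (j : ℝ) * t) (j : ℝ) t := by
    simpa using (hasDerivAt_id t).const_mul (j : ℝ)
  have h2 := (Real.hasDerivAt_cos ((j : ℝ) * t)).comp t h1
  have h3 := (h2.const_mul (j : ℝ)).const_mul (d j)
  refine h3.congr_deriv ?_
  ring

lemma sinPoly_indep : ∀ (m : ℕ) (d : ℕ → ℝ),
    (∀ t, ∑ j ∈ Icc 1 m, d j * Real.sin (j * t) = 0) → ∀ j ∈ Icc 1 m, d j = 0 := by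
  intro m
  induction m with
  | zero => intro d _ j hj; simp at hj
  | succ m ih =>
    intro d h j hj
    -- second derivative vanishes
    have hfun : (fun t => ∑ j ∈ Icc 1 (m+1), d j * Real.sin (j * t)) = fun _ => (0:ℝ) :=
      funext h
    have hd1 : ∀ t, ∑ j ∈ Icc 1 (m+1), d j * ((j : ℝ) * Real.cos (j * t)) = 0 := by
      intro t
      have := hasDerivAt_sinsum (m+1) d t
      rw [hfun] at this
      exact ((hasDerivAt_const t (0:ℝ)).unique this).symm
    have hfun1 : (fun t => ∑ j ∈ Icc 1 (m+1), d j * ((j : ℝ) * Real.cos (j * t)))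
        = fun _ => (0:ℝ) := funext hd1
    have hd2 : ∀ t, ∑ j ∈ Icc 1 (m+1), d j * ((j : ℝ) ^ 2 * Real.sin (j * t)) = 0 := by
      intro t
      have := hasDerivAt_cossum (m+1) d t
      rw [hfun1] at this
      have h0 := ((hasDerivAt_const t (0:ℝ)).unique this).symm
      have : ∑ j ∈ Icc 1 (m+1), -(d j * ((j : ℝ) ^ 2 * Real.sin (j * t))) = 0 := h0
      rw [Finset.sum_neg_distrib] at this
      linarith
    have hsplit : Icc 1 (m+1) = insert (m+1) (Icc 1 m) := by
      ext x; simp [Finset.mem_Icc]; omega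
    have hnotmem : m + 1 ∉ Icc 1 m := by simp
    -- the degree-m sine polynomial with coefficients e j vanishes
    set e : ℕ → ℝ := fun j => d j * (((m:ℝ)+1) ^ 2 - (j : ℝ) ^ 2) with he
    have hde : ∀ j ∈ Icc 1 m, e j = 0 := by
      apply ih
      intro t
      have h1 := h t
      have h2 := hd2 t
      rw [hsplit, Finset.sum_insert hnotmem] at h1 h2
      have : ∑ j ∈ Icc 1 m, e j * Real.sin (j * t)
          = ((m:ℝ)+1)^2 * (∑ j ∈ Icc 1 m, d j * Real.sin (j * t))
            - ∑ j ∈ Icc 1 m, d j * ((j : ℝ) ^ 2 * Real.sin (j * t)) := by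
        rw [Finset.mul_sum, ← Finset.sum_sub_distrib]
        apply Finset.sum_congr rfl
        intro j _; simp [he]; ring
      rw [this]
      push_cast at h1 h2 ⊢
      nlinarith [h1, h2]
    have hdj : ∀ j ∈ Icc 1 m, d j = 0 := by
      intro j hjm
      have hj' := hde j hjm
      simp only [he] at hj'
      have hjle : (j:ℝ) ≤ m := by exact_mod_cast (Finset.mem_Icc.mp hjm).2
      have : ((m:ℝ)+1)^2 - (j:ℝ)^2 ≠ 0 := by
        have hj0 : (0:ℝ) ≤ j := Nat.cast_nonneg j
        nlinarith
      exact (mul_eq_zero.mp hj').resolve_right this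
    have hdm : d (m+1) = 0 := by
      have hmne : ((m:ℝ)+1) ≠ 0 := by positivity
      have ht := h (Real.pi / (2 * ((m:ℝ)+1)))
      rw [hsplit, Finset.sum_insert hnotmem] at ht
      have hz : ∑ j ∈ Icc 1 m, d j * Real.sin (j * (Real.pi / (2 * ((m:ℝ)+1)))) = 0 := by
        apply Finset.sum_eq_zero
        intro j hjm; rw [hdj j hjm]; ring
      rw [hz, add_zero] at ht
      have harg : ((m+1:ℕ):ℝ) * (Real.pi / (2 * ((m:ℝ)+1))) = Real.pi / 2 := by
        push_cast; field_simp
      rw [harg, Real.sin_pi_div_two, mul_one] at ht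
      exact ht
    rcases Finset.mem_Icc.mp hj with ⟨hj1, hj2⟩
    rcases Nat.lt_or_ge j (m+1) with hlt | hge
    · exact hdj j (Finset.mem_Icc.mpr ⟨hj1, by omega⟩)
    · have : j = m + 1 := by omega
      rw [this]; exact hdm

def auxB (a : ℕ → ℝ) (c : ℝ) (n : ℕ) : ℕ → ℝ
  | 0 => 0
  | 1 => 2 * a n
  | (i+2) => 2 * a (n - i - 1) + 2 * c * auxB a c n (i+1) - auxB a c n i

lemma sin_shift (x t : ℝ) :
    Real.sin ((x + 1) * t) + Real.sin ((x - 1) * t) = 2 * Real.cos t * Real.sin (x * t) := by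
  rw [show (x + 1) * t = x * t + t by ring, show (x - 1) * t = x * t - t by ring,
    Real.sin_add, Real.sin_sub]
  ring

lemma key (n : ℕ) (hn : 1 ≤ n) (a : ℕ → ℝ) (c : ℝ) :
    ∀ m, m ≤ n - 1 → ∀ t : ℝ,
      ∑ j ∈ Icc (n - m) n, a j * Real.sin (j * t) =
        (Real.cos t - c) * ∑ j ∈ Icc (n - m) (n - 1), auxB a c n (n - j) * Real.sin (j * t)
          + auxB a c n (m + 1) / 2 * Real.sin ((n - m : ℕ) * t)
          - auxB a c n m / 2 * Real.sin ((n - m - 1 : ℕ) * t) := by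
  intro m
  induction m with
  | zero =>
    intro _ t
    simp only [Nat.sub_zero]
    rw [Finset.Icc_self, Finset.sum_singleton,
      Finset.Icc_eq_empty (by omega : ¬ n ≤ n - 1), Finset.sum_empty]
    simp [auxB]
  | succ m ih =>
    intro hm t
    obtain ⟨k, hk1, rfl⟩ : ∃ k, 1 ≤ k ∧ n = k + m + 1 := ⟨n - m - 1, by omega, by omega⟩
    have ihm := ih (by omega) t
    simp only [show k + m + 1 - (m + 1) = k from by omega,
      show k + m + 1 - m = k + 1 from by omega,
      show k + m + 1 - m - 1 = k from by omega,
      show k + m + 1 - 1 = k + m from by omega,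
      show k + m + 1 - (m + 1) - 1 = k - 1 from by omega,
      show k + 1 - 1 = k from by omega] at ihm ⊢
    have hsplit1 : Icc k (k + m + 1) = insert k (Icc (k+1) (k + m + 1)) :=
      (Finset.insert_Icc_add_one_left_eq_Icc (by omega)).symm
    have hsplit2 : Icc k (k + m) = insert k (Icc (k+1) (k + m)) :=
      (Finset.insert_Icc_add_one_left_eq_Icc (by omega)).symm
    rw [hsplit1, Finset.sum_insert (by simp), hsplit2, Finset.sum_insert (by simp),
      ihm]
    have hB : auxB a c (k + m + 1) (m + 2)
        = 2 * a k + 2 * c * auxB a c (k + m + 1) (m + 1) - auxB a c (k + m + 1) m := by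
      show 2 * a (k + m + 1 - m - 1) + _ - _ = _
      rw [show k + m + 1 - m - 1 = k from by omega]
    have hkk : auxB a c (k + m + 1) (k + m + 1 - k) = auxB a c (k + m + 1) (m + 1) := by
      rw [show k + m + 1 - k = m + 1 from by omega]
    have hcast : ((k - 1 : ℕ) : ℝ) = (k : ℝ) - 1 := by
      push_cast [Nat.cast_sub hk1]; ring
    have hshift := sin_shift (k : ℝ) t
    rw [hB, hkk]
    push_cast [hcast]
    linear_combination (auxB a c (k + m + 1) (m + 1) / 2) * hshift

lemma vanish_factor (m : ℕ) (d : ℕ → ℝ) (c : ℝ)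
    (hc : ∀ s : ℝ, Real.cos s = c → Real.sin s ≠ 0)
    (h : ∀ t, (Real.cos t - c) * ∑ j ∈ Icc 1 m, d j * Real.sin (j * t) = 0) :
    ∀ t, ∑ j ∈ Icc 1 m, d j * Real.sin (j * t) = 0 := by
  intro s
  by_cases hcs : Real.cos s = c
  · have hsin := hc s hcs
    have hD := hasDerivAt_sinsum m d s
    have hcos : HasDerivAt (fun t => Real.cos t - c) (-Real.sin s) s :=
      (Real.hasDerivAt_cos s).sub_const c
    have hH := hcos.fun_mul hD
    have hfun : (fun t => (Real.cos t - c) * ∑ j ∈ Icc 1 m, d j * Real.sin (j * t))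
        = fun _ => (0:ℝ) := funext h
    rw [hfun] at hH
    have h0 := (hasDerivAt_const s (0:ℝ)).unique hH
    rw [hcs, sub_self, zero_mul, add_zero] at h0
    have : Real.sin s * ∑ j ∈ Icc 1 m, d j * Real.sin (j * s) = 0 := by linarith
    rcases mul_eq_zero.mp this with h' | h'
    · exact absurd h' hsin
    · exact h'
  · have := h s
    rcases mul_eq_zero.mp this with h' | h'
    · exact absurd (by linarith [sub_eq_zero.mp h'] : Real.cos s = c) hcs
    · exact h'

theorem stmt_1 (n : ℕ) (hn : 2 ≤ n) (a : ℕ → ℝ) (t₁ : ℝ)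
    (ht₁ : t₁ ∈ Set.Ioo 0 Real.pi)
    (hS : ∑ j ∈ Finset.Icc 1 n, a j * Real.sin (j * t₁) = 0) :
    ∃! b : ℕ → ℝ, (∀ j, j ∉ Finset.Icc 1 (n - 1) → b j = 0) ∧
      ∀ t : ℝ, ∑ j ∈ Finset.Icc 1 n, a j * Real.sin (j * t) =
        (Real.cos t - Real.cos t₁) *
          ∑ j ∈ Finset.Icc 1 (n - 1), b j * Real.sin (j * t) := by
  set c := Real.cos t₁ with hc
  have hsin1 : 0 < Real.sin t₁ := Real.sin_pos_of_pos_of_lt_pi ht₁.1 ht₁.2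
  have hcs : ∀ s : ℝ, Real.cos s = c → Real.sin s ≠ 0 := by
    intro s hs h0
    have e1 := Real.sin_sq_add_cos_sq s
    have e2 := Real.sin_sq_add_cos_sq t₁
    rw [h0, hs] at e1
    nlinarith
  have hkey := key n (by omega) a c (n - 1) (le_refl _)
  simp only [show n - (n - 1) = 1 from by omega, show n - 1 + 1 = n from by omega,
    show n - (n - 1) - 1 = 0 from by omega] at hkey
  -- determine auxB a c n n = 0 using S(t₁) = 0
  have hBn : auxB a c n n = 0 := by
    have h1 := hkey t₁
    rw [hS] at h1
    simp only [hc, sub_self, zero_mul, Nat.cast_one, one_mul, show (1:ℕ)-1 = 0 from rfl,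
      Nat.cast_zero, zero_mul, Real.sin_zero, mul_zero, zero_add, sub_zero] at h1
    have : auxB a c n n / 2 * Real.sin t₁ = 0 := by linarith
    rcases mul_eq_zero.mp this with h' | h'
    · linarith
    · linarith
  have hmain : ∀ t : ℝ, ∑ j ∈ Finset.Icc 1 n, a j * Real.sin (j * t) =
      (Real.cos t - c) * ∑ j ∈ Finset.Icc 1 (n - 1), auxB a c n (n - j) * Real.sin (j * t) := by
    intro t
    have h1 := hkey t
    rw [hBn] at h1
    simpa using h1
  refine ⟨fun j => if j ∈ Finset.Icc 1 (n-1) then auxB a c n (n - j) else 0, ⟨?_, ?_⟩, ?_⟩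
  · intro j hj; simp [hj]
  · intro t
    rw [hmain t]
    congr 1
    apply Finset.sum_congr rfl
    intro j hj
    simp [hj]
  · rintro b' ⟨hb'0, hb'⟩
    funext j
    by_cases hj : j ∈ Finset.Icc 1 (n-1)
    · have hdiff : ∀ t, (Real.cos t - c) *
          ∑ j ∈ Icc 1 (n-1), (b' j - auxB a c n (n - j)) * Real.sin (j * t) = 0 := by
        intro t
        have h1 := hb' t
        have h2 := hmain t
        have : ∀ s : Finset ℕ, ∑ i ∈ s, (b' i - auxB a c n (n - i)) * Real.sin (i * t)
            = (∑ i ∈ s, b' i * Real.sin (i * t)) - ∑ i ∈ s, auxB a c n (n - i) * Real.sin (i * t) := by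
          intro s; rw [← Finset.sum_sub_distrib]; apply Finset.sum_congr rfl; intro i _; ring
        rw [this]
        rw [mul_sub]
        rw [← h1, ← h2]
        ring
      have hz := sinPoly_indep (n-1) (fun j => b' j - auxB a c n (n - j))
        (vanish_factor (n-1) _ c hcs hdiff) j hj
      have : b' j = auxB a c n (n - j) := by linarith
      rw [this, if_pos hj]
    · rw [hb'0 j hj, if_neg hj]
end

section
/- Suppose S(t) = Σ_{j=1}^n a_j sin(jt) satisfies S(t_1) = 0 for some t_1 ∈ (0,π), and write S(t) = (cos t - cos t_1) · Σ_{j=1}^{n-1} b_j sin(jt) with the unique coefficients b_j. Then C(t_1) = Σ_{j=1}^n a_j cos(jt_1) = -b_1/2. -/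
open Real Finset intervalIntegral

lemma cos_int_integral (c : ℤ) :
    ∫ x in (0:ℝ)..π, Real.cos (c * x) = if c = 0 then π else 0 := by
  rcases eq_or_ne c 0 with h | h
  · simp [h, Real.pi_pos.le]
  · rw [if_neg h]
    have hc : (c : ℝ) ≠ 0 := Int.cast_ne_zero.mpr h
    have : ∫ x in (0:ℝ)..π, Real.cos (c * x)
        = (Real.sin (c * π) / c) - (Real.sin (c * 0) / c) := by
      apply intervalIntegral.integral_eq_sub_of_hasDerivAt (f := fun x => Real.sin (c * x) / c)
      · intro x _
        have h1 : HasDerivAt (fun x : ℝ => Real.sin (c * x)) (Real.cos (c * x) * c) x := by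
          simpa [Function.comp_def] using (Real.hasDerivAt_sin (c * x)).comp x ((hasDerivAt_id x).const_mul (c:ℝ))
        simpa [mul_div_assoc, mul_div_cancel_right₀ _ hc] using h1.div_const (c:ℝ)
      · exact (Real.continuous_cos.comp (continuous_const.mul continuous_id)).intervalIntegrable 0 π
    rw [this, Real.sin_int_mul_pi, mul_zero, Real.sin_zero]
    simp

lemma sin_orth (k m : ℕ) :
    ∫ x in (0:ℝ)..π, Real.sin (k * x) * Real.sin (m * x)
      = if k = m ∧ k ≠ 0 then π / 2 else 0 := by
  have hpt : ∀ x : ℝ, Real.sin (k * x) * Real.sin (m * x)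
      = (Real.cos ((((k:ℤ) - (m:ℤ)):ℤ) * x) - Real.cos ((((k:ℤ) + (m:ℤ)):ℤ) * x)) / 2 := by
    intro x
    push_cast
    rw [sub_mul, add_mul, Real.cos_sub, Real.cos_add]
    ring
  simp_rw [hpt]
  rw [intervalIntegral.integral_div, intervalIntegral.integral_sub
      (Continuous.intervalIntegrable (by fun_prop) 0 π)
      (Continuous.intervalIntegrable (by fun_prop) 0 π),
    cos_int_integral, cos_int_integral]
  rcases eq_or_ne k m with rfl | hne
  · rcases eq_or_ne k 0 with rfl | hk
    · norm_num
    · have h1 : (k:ℤ) - k = 0 := by ring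
      have h2 : (k:ℤ) + k ≠ 0 := by
        have : 0 < (k:ℤ) := by exact_mod_cast Nat.pos_of_ne_zero hk
        omega
      rw [if_pos h1, if_neg h2, if_pos ⟨rfl, hk⟩]
      ring
  · have h1 : (k:ℤ) - m ≠ 0 := by
      intro h
      exact hne (by exact_mod_cast sub_eq_zero.mp h)
    rcases eq_or_ne ((k:ℤ) + m) 0 with h0 | h0
    · have hk0 : k = 0 := by omega
      have hm0 : m = 0 := by omega
      exact absurd (hk0.trans hm0.symm) hne
    · rw [if_neg h1, if_neg h0, if_neg (by simp [hne])]
      ring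

theorem stmt_4 (n : ℕ) (hn : 2 ≤ n) (a b : ℕ → ℝ) (t₁ : ℝ)
    (ht₁ : t₁ ∈ Set.Ioo 0 Real.pi)
    (hS : ∑ j ∈ Finset.Icc 1 n, a j * Real.sin (j * t₁) = 0)
    (hrep : ∀ t : ℝ, ∑ j ∈ Finset.Icc 1 n, a j * Real.sin (j * t) =
      (Real.cos t - Real.cos t₁) *
        ∑ j ∈ Finset.Icc 1 (n - 1), b j * Real.sin (j * t)) :
    ∑ j ∈ Finset.Icc 1 n, a j * Real.cos (j * t₁) = -b 1 / 2 := by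
  have hn1 : 1 ≤ n - 1 := by omega
  set b' : ℕ → ℝ := fun j => if j ∈ Finset.Icc 1 (n-1) then b j else 0 with hb'
  -- a generic picking lemma
  have sum_pick : ∀ c : ℕ, ∑ j ∈ Finset.Icc 1 (n-1),
      b j * (if j = c ∧ j ≠ 0 then π/2 else 0) = π/2 * b' c := by
    intro c
    rcases eq_or_ne c 0 with rfl | hc
    · have : ∀ j ∈ Finset.Icc 1 (n-1), b j * (if j = 0 ∧ j ≠ 0 then π/2 else 0) = 0 := by
        intro j hj
        simp
      rw [Finset.sum_congr rfl this, Finset.sum_const_zero]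
      simp [hb']
    · have hiff : ∀ j : ℕ, (j = c ∧ j ≠ 0) ↔ j = c := fun j =>
        and_iff_left_of_imp (fun h => h ▸ hc)
      simp_rw [hiff, mul_ite, mul_zero]
      rw [Finset.sum_ite_eq' (Finset.Icc 1 (n-1)) c (fun j => b j * (π/2))]
      simp only [hb']
      split_ifs <;> ring
  -- the coefficient relation
  have key : ∀ m ∈ Finset.Icc 1 n, a m =
      1/2 * b' (m+1) + 1/2 * b' (m-1) - Real.cos t₁ * b' m := by
    intro m hm
    obtain ⟨hm1, hmn⟩ := Finset.mem_Icc.mp hm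
    have hL : ∫ t in (0:ℝ)..π,
        (∑ j ∈ Finset.Icc 1 n, a j * Real.sin (j * t)) * Real.sin (m * t) = π/2 * a m := by
      have hpt : ∀ t : ℝ, (∑ j ∈ Finset.Icc 1 n, a j * Real.sin (j * t)) * Real.sin (m * t)
          = ∑ j ∈ Finset.Icc 1 n, a j * (Real.sin (j*t) * Real.sin (m*t)) := by
        intro t; rw [Finset.sum_mul]; exact Finset.sum_congr rfl fun j _ => by ring
      simp_rw [hpt]
      rw [intervalIntegral.integral_finset_sum
        (fun j _ => Continuous.intervalIntegrable (by fun_prop) 0 π)]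
      simp_rw [intervalIntegral.integral_const_mul, sin_orth]
      rw [Finset.sum_eq_single m (fun j hj hjm => by simp [hjm]) (fun h => absurd hm h)]
      have : m ≠ 0 := by omega
      simp [this]
      ring
    have hm1' : ((m-1:ℕ):ℝ) = (m:ℝ) - 1 := by
      push_cast [Nat.cast_sub hm1]; ring
    have hR : ∫ t in (0:ℝ)..π,
        ((Real.cos t - Real.cos t₁) * ∑ j ∈ Finset.Icc 1 (n-1), b j * Real.sin (j * t))
          * Real.sin (m * t)
        = π/2 * (1/2 * b' (m+1) + 1/2 * b' (m-1) - Real.cos t₁ * b' m) := by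
      have hpt : ∀ t : ℝ,
          ((Real.cos t - Real.cos t₁) * ∑ j ∈ Finset.Icc 1 (n-1), b j * Real.sin (j * t))
            * Real.sin (m * t)
          = ∑ j ∈ Finset.Icc 1 (n-1),
              (1/2 * (b j * (Real.sin (j*t) * Real.sin ((m+1:ℕ)*t)))
               + 1/2 * (b j * (Real.sin (j*t) * Real.sin ((m-1:ℕ)*t)))
               - Real.cos t₁ * (b j * (Real.sin (j*t) * Real.sin (m*t)))) := by
        intro t
        rw [Finset.mul_sum, Finset.sum_mul]
        refine Finset.sum_congr rfl fun j _ => ?_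
        have hsin : Real.sin ((m+1:ℕ)*t) + Real.sin ((m-1:ℕ)*t)
            = 2 * Real.sin (m*t) * Real.cos t := by
          push_cast [hm1']
          rw [show ((m:ℝ)+1)*t = m*t + t by ring, show ((m:ℝ)-1)*t = m*t - t by ring,
            Real.sin_add, Real.sin_sub]
          ring
        linear_combination (-(b j * Real.sin (j*t)) / 2) * hsin
      simp_rw [hpt]
      rw [intervalIntegral.integral_finset_sum
        (fun j _ => Continuous.intervalIntegrable (by fun_prop) 0 π)]
      have hterm : ∀ j ∈ Finset.Icc 1 (n-1),
          (∫ t in (0:ℝ)..π,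
            (1/2 * (b j * (Real.sin (j*t) * Real.sin ((m+1:ℕ)*t)))
             + 1/2 * (b j * (Real.sin (j*t) * Real.sin ((m-1:ℕ)*t)))
             - Real.cos t₁ * (b j * (Real.sin (j*t) * Real.sin (m*t)))))
          = 1/2 * (b j * (if j = m+1 ∧ j ≠ 0 then π/2 else 0))
            + 1/2 * (b j * (if j = m-1 ∧ j ≠ 0 then π/2 else 0))
            - Real.cos t₁ * (b j * (if j = m ∧ j ≠ 0 then π/2 else 0)) := by
        intro j _
        rw [intervalIntegral.integral_sub (Continuous.intervalIntegrable (by fun_prop) 0 π)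
            (Continuous.intervalIntegrable (by fun_prop) 0 π),
          intervalIntegral.integral_add (Continuous.intervalIntegrable (by fun_prop) 0 π)
            (Continuous.intervalIntegrable (by fun_prop) 0 π)]
        simp_rw [intervalIntegral.integral_const_mul, sin_orth]
      rw [Finset.sum_congr rfl hterm, Finset.sum_sub_distrib, Finset.sum_add_distrib,
        ← Finset.mul_sum, ← Finset.mul_sum, ← Finset.mul_sum, sum_pick, sum_pick, sum_pick]
      ring
    have hEq : π/2 * a m = π/2 * (1/2 * b' (m+1) + 1/2 * b' (m-1) - Real.cos t₁ * b' m) := by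
      rw [← hL, ← hR]
      exact intervalIntegral.integral_congr (fun t _ => by rw [hrep t])
    exact mul_left_cancel₀ (by positivity) hEq
  -- telescoping
  set V : ℕ → ℝ := fun m => b' (m+1) * Real.cos (m*t₁) - b' m * Real.cos ((m+1:ℕ)*t₁) with hV
  have hVterm : ∀ m ∈ Finset.Icc 1 n,
      a m * Real.cos (m*t₁) = (V m - V (m-1))/2 := by
    intro m hm
    obtain ⟨hm1, hmn⟩ := Finset.mem_Icc.mp hm
    rw [key m hm]
    have hm1' : ((m-1:ℕ):ℝ) = (m:ℝ) - 1 := by push_cast [Nat.cast_sub hm1]; ring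
    have hsub : m - 1 + 1 = m := by omega
    have hcos : Real.cos ((m+1:ℕ)*t₁) + Real.cos ((m-1:ℕ)*t₁)
        = 2 * Real.cos t₁ * Real.cos (m*t₁) := by
      push_cast [hm1']
      rw [show ((m:ℝ)+1)*t₁ = m*t₁ + t₁ by ring, show ((m:ℝ)-1)*t₁ = m*t₁ - t₁ by ring,
        Real.cos_add, Real.cos_sub]
      ring
    rw [hV]
    simp only [hsub]
    push_cast [hm1'] at hcos ⊢
    linear_combination (b' m / 2) * hcos
  rw [Finset.sum_congr rfl hVterm]
  have hshift : ∑ m ∈ Finset.Icc 1 n, (V m - V (m-1))/2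
      = ∑ i ∈ Finset.range n, (V (i+1) - V i)/2 := by
    rw [← Finset.Ico_add_one_right_eq_Icc, Finset.sum_Ico_eq_sum_range]
    refine Finset.sum_congr (by rw [Nat.add_sub_cancel]) fun i _ => ?_
    rw [show 1+i = i+1 from by omega, Nat.add_sub_cancel]
  rw [hshift]
  have : ∑ i ∈ Finset.range n, (V (i+1) - V i)/2 = (V n - V 0)/2 := by
    rw [← Finset.sum_div, Finset.sum_range_sub]
  rw [this]
  have hVn : V n = 0 := by
    have h1 : b' n = 0 := by
      show (if n ∈ Finset.Icc 1 (n-1) then b n else 0) = 0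
      rw [if_neg (by simp only [Finset.mem_Icc]; omega)]
    have h2 : b' (n+1) = 0 := by
      show (if n+1 ∈ Finset.Icc 1 (n-1) then b (n+1) else 0) = 0
      rw [if_neg (by simp only [Finset.mem_Icc]; omega)]
    simp [hV, h1, h2]
  have hV0 : V 0 = b 1 := by
    have h1 : b' 1 = b 1 := by
      show (if 1 ∈ Finset.Icc 1 (n-1) then b 1 else 0) = b 1
      rw [if_pos (by simp only [Finset.mem_Icc]; omega)]
    have h2 : b' 0 = 0 := by
      show (if 0 ∈ Finset.Icc 1 (n-1) then b 0 else 0) = 0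
      rw [if_neg (by simp only [Finset.mem_Icc]; omega)]
    simp [hV, h1, h2]
  rw [hVn, hV0]
  ring
end

section
/- Let t_1,...,t_m ∈ (0,π) be such that S(t_j) = 0 for all j = 1,...,m, where m < n. Then there exist unique real coefficients c_1,...,c_{n-m} such that S(t) = ∏_{j=1}^m (cos t - cos t_j) · Σ_{j=1}^{n-m} c_j sin(jt) for all t. -/
open Polynomial Polynomial.Chebyshev Real Finset

lemma Uinfo : ∀ k : ℕ, (U ℝ (k : ℤ)).degree = (k : ℕ) ∧ (U ℝ (k : ℤ)).coeff k = 2 ^ k := by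
  intro k
  induction k using Nat.strong_induction_on with
  | _ k ih =>
    match k with
    | 0 => simp [U_zero]
    | 1 =>
      constructor
      · rw [show ((1:ℕ) : ℤ) = 1 by norm_num, U_one]
        compute_degree!
      · rw [show ((1:ℕ) : ℤ) = 1 by norm_num, U_one]
        have hC2 : (C 2 : ℝ[X]) = 2 := by exact_mod_cast rfl
        rw [show ((2:ℝ[X]) * X) = C 2 * X by rw [hC2]]
        simp [coeff_C_mul, coeff_X]
    | (k+2) =>
      have h1 := ih (k+1) (by omega)
      have h0 := ih k (by omega)
      have hrec : U ℝ (((k+2:ℕ)):ℤ) = 2 * X * U ℝ ((k:ℤ)+1) - U ℝ k := by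
        push_cast
        exact U_add_two ℝ k
      have hc1 : ((k+1:ℕ) : ℤ) = (k:ℤ)+1 := by push_cast; ring
      rw [hc1] at h1
      have hX : ((2:ℝ[X]) * X).degree = 1 := by compute_degree!
      have hdeg2 : (2 * X * U ℝ ((k:ℤ)+1)).degree = ((k+2 : ℕ) : WithBot ℕ) := by
        rw [degree_mul, hX, h1.1]
        push_cast
        rw [← Nat.cast_one, ← Nat.cast_add]
        norm_num
        ring
      have hlt : (U ℝ (k:ℤ)).degree < ((k+2:ℕ) : WithBot ℕ) := by
        rw [h0.1]
        exact Nat.cast_lt.mpr (by omega)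
      constructor
      · rw [hrec]
        rw [degree_sub_eq_left_of_degree_lt (by rw [hdeg2]; exact hlt)]
        exact hdeg2
      · rw [hrec]
        rw [coeff_sub]
        have hz : (U ℝ (k:ℤ)).coeff (k+2) = 0 :=
          coeff_eq_zero_of_degree_lt (by rw [h0.1]; exact Nat.cast_lt.mpr (by omega))
        rw [hz, sub_zero]
        have hC2 : (C 2 : ℝ[X]) = 2 := by exact_mod_cast rfl
        rw [show ((2:ℝ[X]) * X * U ℝ ((k:ℤ)+1)) = C 2 * (U ℝ ((k:ℤ)+1) * X) by rw [hC2]; ring]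
        rw [coeff_C_mul, coeff_mul_X, h1.2]
        ring

noncomputable def Psum (c : ℕ → ℝ) (N : ℕ) : Polynomial ℝ :=
  ∑ k ∈ Icc 1 N, Polynomial.C (c k) * U ℝ ((k - 1 : ℕ) : ℤ)

lemma Icc_succ (N : ℕ) : Icc 1 (N+1) = insert (N+1) (Icc 1 N) := by
  rw [← Finset.Ico_insert_right (by omega : 1 ≤ N+1), Finset.Ico_add_one_right_eq_Icc]

lemma degCmul (a : ℝ) (p : Polynomial ℝ) : (Polynomial.C a * p).degree ≤ p.degree := by
  calc (Polynomial.C a * p).degree ≤ (Polynomial.C a).degree + p.degree := degree_mul_le _ _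
    _ ≤ 0 + p.degree := add_le_add degree_C_le le_rfl
    _ = p.degree := zero_add _

lemma Psum_degree (c : ℕ → ℝ) (N : ℕ) : (Psum c N).degree < (N : WithBot ℕ) := by
  apply lt_of_le_of_lt (degree_sum_le _ _)
  rw [Finset.sup_lt_iff (by exact_mod_cast WithBot.bot_lt_coe N)]
  intro k hk
  simp only [mem_Icc] at hk
  calc (Polynomial.C (c k) * U ℝ ((k-1:ℕ):ℤ)).degree
      ≤ (U ℝ ((k-1:ℕ):ℤ)).degree := degCmul _ _
    _ = ((k-1 : ℕ) : WithBot ℕ) := (Uinfo (k-1)).1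
    _ < (N : WithBot ℕ) := Nat.cast_lt.mpr (by omega)

lemma Psum_eval (c : ℕ → ℝ) (N : ℕ) (x : ℝ) :
    Real.sin x * (Psum c N).eval (Real.cos x) = ∑ k ∈ Icc 1 N, c k * Real.sin (k * x) := by
  unfold Psum
  rw [eval_finset_sum, Finset.mul_sum]
  apply Finset.sum_congr rfl
  intro k hk
  simp only [mem_Icc] at hk
  rw [eval_mul, eval_C]
  have h := U_real_cos x ((k - 1 : ℕ) : ℤ)
  have hk1 : (((k-1:ℕ):ℤ) + 1 : ℝ) = (k : ℝ) := by
    push_cast [Nat.cast_sub hk.1]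
    ring
  rw [hk1] at h
  rw [show Real.sin x * (c k * eval (Real.cos x) (U ℝ ((k-1:ℕ):ℤ)))
      = c k * (eval (Real.cos x) (U ℝ ((k-1:ℕ):ℤ)) * Real.sin x) by ring, h]

lemma Psum_inj : ∀ (N : ℕ) (d : ℕ → ℝ), Psum d N = 0 → ∀ k ∈ Icc 1 N, d k = 0 := by
  intro N
  induction N with
  | zero => intro d _ k hk; exact absurd hk (by simp)
  | succ N ih =>
    intro d hd k hk
    have hsplit : Psum d (N+1) = Psum d N + Polynomial.C (d (N+1)) * U ℝ ((N:ℕ):ℤ) := by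
      unfold Psum
      rw [Icc_succ, Finset.sum_insert (by simp)]
      simp only [Nat.add_sub_cancel]
      ring
    have hcoeff : (Psum d (N+1)).coeff N = d (N+1) * 2 ^ N := by
      rw [hsplit, coeff_add, coeff_eq_zero_of_degree_lt (Psum_degree d N), zero_add,
        coeff_C_mul, (Uinfo N).2]
    have hdN : d (N+1) = 0 := by
      have := hcoeff
      rw [hd, coeff_zero] at this
      have h2 : (2:ℝ)^N ≠ 0 := by positivity
      field_simp at this
      exact (mul_eq_zero.mp this.symm).resolve_right h2
    have hPN : Psum d N = 0 := by
      have := hsplit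
      rw [hd, hdN] at this
      simpa using this.symm
    simp only [mem_Icc] at hk
    rcases Nat.lt_or_ge k (N+1) with h | h
    · exact ih d hPN k (by simp; omega)
    · have : k = N+1 := by omega
      rw [this]; exact hdN

lemma Psum_span : ∀ (N : ℕ) (Q : Polynomial ℝ), Q.degree < (N : WithBot ℕ) →
    ∃ c : ℕ → ℝ, (∀ j, j ∉ Icc 1 N → c j = 0) ∧ Q = Psum c N := by
  intro N
  induction N with
  | zero =>
    intro Q hQ
    refine ⟨0, by simp, ?_⟩
    have : Q = 0 := by
      rw [← degree_eq_bot]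
      exact Nat.WithBot.lt_zero_iff.mp (by exact_mod_cast hQ)
    simp [this, Psum]
  | succ N ih =>
    intro Q hQ
    set d : ℝ := Q.coeff N / 2 ^ N with hd
    set Q' : Polynomial ℝ := Q - Polynomial.C d * U ℝ ((N:ℕ):ℤ) with hQ'
    have hdegU : (Polynomial.C d * U ℝ ((N:ℕ):ℤ)).degree ≤ (N : WithBot ℕ) := by
      calc _ ≤ (U ℝ ((N:ℕ):ℤ)).degree := degCmul _ _
        _ = (N : WithBot ℕ) := (Uinfo N).1
    have hQ'deg : Q'.degree < (N : WithBot ℕ) := by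
      rw [degree_lt_iff_coeff_zero]
      intro m hm
      have hm' : N ≤ m := hm
      rcases eq_or_lt_of_le hm' with h | h
      · rw [← h, hQ', coeff_sub, coeff_C_mul, (Uinfo N).2, hd]
        field_simp
        simp
      · rw [hQ', coeff_sub]
        have h1 : Q.coeff m = 0 := coeff_eq_zero_of_degree_lt
          (lt_of_lt_of_le hQ (Nat.cast_le.mpr h))
        have h2 : (Polynomial.C d * U ℝ ((N:ℕ):ℤ)).coeff m = 0 := coeff_eq_zero_of_degree_lt
          (lt_of_le_of_lt hdegU (Nat.cast_lt.mpr h))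
        rw [h1, h2, sub_zero]
    obtain ⟨c', hc'0, hc'⟩ := ih Q' hQ'deg
    refine ⟨Function.update c' (N+1) d, ?_, ?_⟩
    · intro j hj
      have h1 : j ≠ N+1 := by
        intro h; rw [h] at hj; exact hj (mem_Icc.mpr ⟨by omega, le_rfl⟩)
      rw [Function.update_of_ne h1]
      exact hc'0 j (by simp only [mem_Icc, not_and, not_le] at hj ⊢; omega)
    · unfold Psum
      rw [Icc_succ, Finset.sum_insert (by simp)]
      rw [Function.update_self]
      have hsum : ∑ k ∈ Icc 1 N, Polynomial.C (Function.update c' (N+1) d k) * U ℝ ((k-1:ℕ):ℤ)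
          = Psum c' N := by
        unfold Psum
        apply Finset.sum_congr rfl
        intro k hk
        simp only [mem_Icc] at hk
        rw [Function.update_of_ne (by omega)]
      rw [hsum, ← hc', hQ']
      simp only [Nat.add_sub_cancel]
      ring

lemma prod_root_dvd (s : Finset ℕ) (r : ℕ → ℝ) :
    ∀ P : Polynomial ℝ, (Set.InjOn r s) → (∀ i ∈ s, P.IsRoot (r i)) →
    (∏ i ∈ s, (Polynomial.X - Polynomial.C (r i))) ∣ P := by
  induction s using Finset.induction_on with
  | empty => intro P _ _; simp
  | @insert i s hi ih =>
    intro P hinj hroot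
    have h1 : (Polynomial.X - Polynomial.C (r i)) ∣ P :=
      dvd_iff_isRoot.mpr (hroot i (mem_insert_self i s))
    obtain ⟨P₁, hP₁⟩ := h1
    have hroot1 : ∀ j ∈ s, P₁.IsRoot (r j) := by
      intro j hj
      have hne : r j ≠ r i := by
        intro h
        exact hi (hinj (by simp [hj]) (by simp) h ▸ hj)
      have := hroot j (mem_insert_of_mem hj)
      rw [Polynomial.IsRoot, hP₁] at this
      simp only [eval_mul, eval_sub, eval_X, eval_C] at this
      rcases mul_eq_zero.mp this with h | h
      · exact absurd (by linarith [sub_eq_zero.mp h] : r j = r i) hne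
      · exact h
    obtain ⟨Q, hQ⟩ := ih P₁ (hinj.mono (by simp [Finset.subset_insert])) hroot1
    rw [Finset.prod_insert hi, hP₁, hQ]
    exact ⟨Q, by ring⟩

theorem stmt_5 (n m : ℕ) (hm : 1 ≤ m) (hmn : m < n) (a : ℕ → ℝ) (t : ℕ → ℝ)
    (ht : ∀ j ∈ Finset.Icc 1 m, t j ∈ Set.Ioo 0 Real.pi)
    (hdist : ∀ i ∈ Finset.Icc 1 m, ∀ j ∈ Finset.Icc 1 m, t i = t j → i = j)
    (hS : ∀ j ∈ Finset.Icc 1 m,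
      ∑ k ∈ Finset.Icc 1 n, a k * Real.sin (k * t j) = 0) :
    ∃! c : ℕ → ℝ, (∀ j, j ∉ Finset.Icc 1 (n - m) → c j = 0) ∧
      ∀ x : ℝ, ∑ k ∈ Finset.Icc 1 n, a k * Real.sin (k * x) =
        (∏ j ∈ Finset.Icc 1 m, (Real.cos x - Real.cos (t j))) *
          ∑ k ∈ Finset.Icc 1 (n - m), c k * Real.sin (k * x) := by
  set P : Polynomial ℝ := Psum a n with hPdef
  have hP : ∀ x, Real.sin x * P.eval (Real.cos x) = ∑ k ∈ Icc 1 n, a k * Real.sin (k * x) :=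
    fun x => Psum_eval a n x
  -- roots
  have hroot : ∀ j ∈ Icc 1 m, P.IsRoot (Real.cos (t j)) := by
    intro j hj
    have h1 := hP (t j)
    rw [hS j hj] at h1
    have hs : Real.sin (t j) ≠ 0 :=
      ne_of_gt (Real.sin_pos_of_pos_of_lt_pi (ht j hj).1 (ht j hj).2)
    exact (mul_eq_zero.mp h1).resolve_left hs
  -- injectivity of cos ∘ t
  have hinj : Set.InjOn (fun j => Real.cos (t j)) (Icc 1 m : Finset ℕ) := by
    intro i hi j hj h
    simp only [Finset.coe_Icc, Set.mem_Icc] at hi hj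
    have hi' : i ∈ Icc 1 m := mem_Icc.mpr hi
    have hj' : j ∈ Icc 1 m := mem_Icc.mpr hj
    have hti := ht i hi'
    have htj := ht j hj'
    apply hdist i hi' j hj'
    exact Real.injOn_cos ⟨le_of_lt hti.1, le_of_lt hti.2⟩ ⟨le_of_lt htj.1, le_of_lt htj.2⟩ h
  obtain ⟨Q, hPQ⟩ := prod_root_dvd (Icc 1 m) (fun j => Real.cos (t j)) P hinj hroot
  set r : Polynomial ℝ := ∏ j ∈ Icc 1 m, (Polynomial.X - Polynomial.C (Real.cos (t j))) with hrdef
  have hrdeg : r.degree = (m : WithBot ℕ) := by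
    rw [hrdef, degree_prod]
    simp [degree_X_sub_C]
  have hQdeg : Q.degree < ((n - m : ℕ) : WithBot ℕ) := by
    rcases eq_or_ne Q 0 with h | h
    · rw [h, degree_zero]
      exact_mod_cast WithBot.bot_lt_coe _
    · have hPn : P.degree < (n : WithBot ℕ) := Psum_degree a n
      rw [hPQ, degree_mul, hrdeg] at hPn
      rw [degree_eq_natDegree h] at hPn ⊢
      have hlt2 : m + Q.natDegree < n := by exact_mod_cast hPn
      exact Nat.cast_lt.mpr (by omega)
  obtain ⟨c, hc0, hcQ⟩ := Psum_span (n - m) Q hQdeg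
  have hQeval : ∀ x, Real.sin x * Q.eval (Real.cos x)
      = ∑ k ∈ Icc 1 (n - m), c k * Real.sin (k * x) := by
    intro x
    rw [hcQ]
    exact Psum_eval c (n - m) x
  have hreval : ∀ x, r.eval (Real.cos x) = ∏ j ∈ Icc 1 m, (Real.cos x - Real.cos (t j)) := by
    intro x
    rw [hrdef, eval_prod]
    exact Finset.prod_congr rfl (fun j _ => by simp)
  have hEq : ∀ x : ℝ, ∑ k ∈ Icc 1 n, a k * Real.sin (k * x) =
      (∏ j ∈ Icc 1 m, (Real.cos x - Real.cos (t j))) *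
        ∑ k ∈ Icc 1 (n - m), c k * Real.sin (k * x) := by
    intro x
    rw [← hP x, hPQ, eval_mul, ← hreval x, ← hQeval x]
    ring
  refine ⟨c, ⟨hc0, hEq⟩, ?_⟩
  -- uniqueness
  intro c' ⟨hc'0, hEq'⟩
  set d : ℕ → ℝ := fun k => c' k - c k with hddef
  have hzero : ∀ x : ℝ, (∏ j ∈ Icc 1 m, (Real.cos x - Real.cos (t j))) *
      (Real.sin x * (Psum d (n - m)).eval (Real.cos x)) = 0 := by
    intro x
    rw [Psum_eval d (n - m) x]
    have h1 := hEq x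
    have h2 := hEq' x
    have h3 : ∑ k ∈ Icc 1 (n-m), d k * Real.sin (k * x)
        = (∑ k ∈ Icc 1 (n-m), c' k * Real.sin (k * x))
          - ∑ k ∈ Icc 1 (n-m), c k * Real.sin (k * x) := by
      rw [← Finset.sum_sub_distrib]
      exact Finset.sum_congr rfl (fun k _ => by rw [hddef]; ring)
    rw [h3, mul_sub, ← h1, ← h2]
    ring
  -- pick τ
  have hne : ((Icc 1 m).image t).Nonempty := by
    apply Finset.Nonempty.image
    exact ⟨1, mem_Icc.mpr ⟨le_rfl, hm⟩⟩
  set τ : ℝ := ((Icc 1 m).image t).min' hne with hτdef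
  obtain ⟨j0, hj0, hτ0⟩ := Finset.mem_image.mp (Finset.min'_mem _ hne)
  have hτle : ∀ j ∈ Icc 1 m, τ ≤ t j := fun j hj =>
    Finset.min'_le _ _ (Finset.mem_image_of_mem t hj)
  have hττ : τ = t j0 := by rw [hτdef, ← hτ0]
  have hτpos : 0 < τ := hττ ▸ (ht j0 hj0).1
  have hτpi : τ < Real.pi := hττ ▸ (ht j0 hj0).2
  have hrootD : ∀ y ∈ Set.Ioo 0 τ, (Psum d (n - m)).IsRoot (Real.cos y) := by
    intro y hy
    have hsy : Real.sin y ≠ 0 :=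
      ne_of_gt (Real.sin_pos_of_pos_of_lt_pi hy.1 (lt_trans hy.2 hτpi))
    have hprod : (∏ j ∈ Icc 1 m, (Real.cos y - Real.cos (t j))) ≠ 0 := by
      apply Finset.prod_ne_zero_iff.mpr
      intro j hj
      have h1 : Real.cos (t j) < Real.cos y := by
        apply Real.strictAntiOn_cos
        · exact ⟨le_of_lt hy.1, le_of_lt (lt_trans hy.2 hτpi)⟩
        · exact ⟨le_of_lt (ht j hj).1, le_of_lt (ht j hj).2⟩
        · exact lt_of_lt_of_le hy.2 (hτle j hj)
      exact sub_ne_zero.mpr (ne_of_gt (by linarith))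
    have := hzero y
    rcases mul_eq_zero.mp this with h | h
    · exact absurd h hprod
    · rcases mul_eq_zero.mp h with h' | h'
      · exact absurd h' hsy
      · exact h'
  have hD0 : Psum d (n - m) = 0 := by
    apply Polynomial.eq_zero_of_infinite_isRoot
    have hsub : Real.cos '' Set.Ioo 0 τ ⊆ {x | (Psum d (n - m)).IsRoot x} := by
      rintro z ⟨y, hy, rfl⟩
      exact hrootD y hy
    apply Set.Infinite.mono hsub
    apply Set.Infinite.image
    · refine Real.injOn_cos.mono (fun y hy => Set.mem_Icc.mpr ?_)
      rw [Set.mem_Ioo] at hy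
      exact ⟨le_of_lt hy.1, le_of_lt (lt_trans hy.2 hτpi)⟩
    · exact Set.Ioo_infinite hτpos
  funext k
  rcases Finset.decidableMem k (Icc 1 (n - m)) with hk | hk
  · rw [hc'0 k hk, hc0 k hk]
  · have := Psum_inj (n - m) d hD0 k hk
    have : c' k - c k = 0 := this
    linarith
end

section
/- Suppose S(t) = ∏_{j=1}^m (cos t - cos t_j) · Σ_{j=m}^{n-m} c_j sin(jt), where t_1,...,t_m are pairwise distinct points in (0,π) and 2 ≤ m ≤ n/2. Then the conjugate polynomial C satisfies C(t_1) = C(t_2) = ... = C(t_m), and in fact C(t_j) = -c_m/2^m for each j. -/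
open Real Finset

private lemma aux_exp (x : ℝ) :
    Complex.exp (x * Complex.I) = (Real.cos x : ℂ) + (Real.sin x : ℂ) * Complex.I := by
  rw [Complex.exp_mul_I, Complex.ofReal_cos, Complex.ofReal_sin]

private lemma aux_exp_inv (x : ℝ) :
    (Complex.exp (x * Complex.I))⁻¹ = Complex.exp ((-x : ℝ) * Complex.I) := by
  rw [← Complex.exp_neg]
  push_cast
  ring_nf

private lemma aux_factor (x θ : ℝ) :
    (Complex.exp (x * Complex.I) - Complex.exp (θ * Complex.I)) *
      (Complex.exp (x * Complex.I) - (Complex.exp (θ * Complex.I))⁻¹) =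
    Complex.exp (x * Complex.I) * (2 * ((Real.cos x : ℂ) - (Real.cos θ : ℂ))) := by
  rw [aux_exp_inv, aux_exp x, aux_exp θ, aux_exp (-θ)]
  simp only [Real.cos_neg, Real.sin_neg, Complex.ofReal_neg]
  have h1 : (Real.sin x : ℂ)^2 + (Real.cos x : ℂ)^2 = 1 := by
    exact_mod_cast congrArg (fun r : ℝ => (r : ℂ)) (Real.sin_sq_add_cos_sq x)
  have h2 : (Real.sin θ : ℂ)^2 + (Real.cos θ : ℂ)^2 = 1 := by
    exact_mod_cast congrArg (fun r : ℝ => (r : ℂ)) (Real.sin_sq_add_cos_sq θ)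
  have hI : (Complex.I)^2 = -1 := Complex.I_sq
  linear_combination (h2 - h1) + ((Real.sin x : ℂ)^2 - (Real.sin θ : ℂ)^2) * hI

private lemma aux_sin (x : ℝ) (k : ℕ) :
    Complex.exp (x * Complex.I) ^ k - ((Complex.exp (x * Complex.I))⁻¹) ^ k =
      2 * Complex.I * (Real.sin (k * x) : ℂ) := by
  have h1 : Complex.exp (x * Complex.I) ^ k = Complex.exp ((k * x : ℝ) * Complex.I) := by
    rw [← Complex.exp_nat_mul]; push_cast; ring_nf
  have h2 : ((Complex.exp (x * Complex.I))⁻¹) ^ k = Complex.exp ((-(k * x) : ℝ) * Complex.I) := by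
    rw [aux_exp_inv, ← Complex.exp_nat_mul]; push_cast; ring_nf
  rw [h1, h2, aux_exp, aux_exp]
  simp only [Real.cos_neg, Real.sin_neg, Complex.ofReal_neg]
  ring

open Polynomial in
private lemma auxA_eval (m : ℕ) (t : ℕ → ℝ) (x : ℝ) :
    (∏ j ∈ Finset.Icc 1 m, ((X - C (Complex.exp (t j * Complex.I))) *
        (X - C ((Complex.exp (t j * Complex.I))⁻¹)))).eval (Complex.exp (x * Complex.I)) =
      Complex.exp (x * Complex.I) ^ m * 2 ^ m *
        ((∏ j ∈ Finset.Icc 1 m, (Real.cos x - Real.cos (t j)) : ℝ) : ℂ) := by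
  simp only [eval_prod, eval_mul, eval_sub, eval_X, eval_C]
  rw [Finset.prod_congr rfl (fun j _ => aux_factor x (t j))]
  rw [Finset.prod_mul_distrib, Finset.prod_const, Finset.prod_mul_distrib, Finset.prod_const]
  push_cast
  rw [Nat.card_Icc]
  simp only [Nat.add_sub_cancel]
  ring

open Polynomial in
private lemma aux_key (n m : ℕ) (hmn : 2 * m ≤ n) (a c : ℕ → ℝ) (t : ℕ → ℝ)
    (hrep : ∀ x : ℝ, ∑ k ∈ Finset.Icc 1 n, a k * Real.sin (k * x) =
      (∏ j ∈ Finset.Icc 1 m, (Real.cos x - Real.cos (t j))) *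
        ∑ k ∈ Finset.Icc m (n - m), c k * Real.sin (k * x)) (x : ℝ) :
    ((∑ k ∈ Finset.Icc 1 n, C (a k : ℂ) * X ^ k) -
      C (((2:ℂ) ^ m)⁻¹) * ((∏ j ∈ Finset.Icc 1 m, ((X - C (Complex.exp (t j * Complex.I))) *
        (X - C ((Complex.exp (t j * Complex.I))⁻¹)))) *
        (∑ k ∈ Finset.Icc m (n - m), C (c k : ℂ) * X ^ (k - m)) - C (c m : ℂ))).eval
        (Complex.exp (x * Complex.I)) =
    ((∑ k ∈ Finset.Icc 1 n, C (a k : ℂ) * X ^ k) -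
      C (((2:ℂ) ^ m)⁻¹) * ((∏ j ∈ Finset.Icc 1 m, ((X - C (Complex.exp (t j * Complex.I))) *
        (X - C ((Complex.exp (t j * Complex.I))⁻¹)))) *
        (∑ k ∈ Finset.Icc m (n - m), C (c k : ℂ) * X ^ (k - m)) - C (c m : ℂ))).eval
        ((Complex.exp (x * Complex.I))⁻¹) := by
  have hz : Complex.exp (x * Complex.I) ≠ 0 := Complex.exp_ne_zero _
  set z : ℂ := Complex.exp (x * Complex.I) with hzdef
  -- P difference
  have hP : (∑ k ∈ Finset.Icc 1 n, (a k : ℂ) * z ^ k) - (∑ k ∈ Finset.Icc 1 n, (a k : ℂ) * (z⁻¹) ^ k)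
      = 2 * Complex.I * ((∑ k ∈ Finset.Icc 1 n, a k * Real.sin (k * x) : ℝ) : ℂ) := by
    push_cast
    rw [← Finset.sum_sub_distrib, Finset.mul_sum]
    refine Finset.sum_congr rfl fun k _ => ?_
    rw [← mul_sub, hzdef, aux_sin x k]
    push_cast
    ring
  -- A evals
  have hA : (∏ j ∈ Finset.Icc 1 m, ((X - C (Complex.exp (t j * Complex.I))) *
        (X - C ((Complex.exp (t j * Complex.I))⁻¹)))).eval z =
      z ^ m * 2 ^ m * ((∏ j ∈ Finset.Icc 1 m, (Real.cos x - Real.cos (t j)) : ℝ) : ℂ) :=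
    auxA_eval m t x
  have hA' : (∏ j ∈ Finset.Icc 1 m, ((X - C (Complex.exp (t j * Complex.I))) *
        (X - C ((Complex.exp (t j * Complex.I))⁻¹)))).eval z⁻¹ =
      (z⁻¹) ^ m * 2 ^ m * ((∏ j ∈ Finset.Icc 1 m, (Real.cos x - Real.cos (t j)) : ℝ) : ℂ) := by
    rw [hzdef, aux_exp_inv]
    have := auxA_eval m t (-x)
    simp only [Real.cos_neg] at this
    rw [this, ← aux_exp_inv]
  -- B evals combined with powers of z
  have hAB : z ^ m * (∑ k ∈ Finset.Icc m (n - m), (c k : ℂ) * z ^ (k - m)) =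
      ∑ k ∈ Finset.Icc m (n - m), (c k : ℂ) * z ^ k := by
    rw [Finset.mul_sum]
    refine Finset.sum_congr rfl fun k hk => ?_
    have hk' : m ≤ k := (Finset.mem_Icc.mp hk).1
    rw [← mul_assoc, mul_comm (z ^ m), mul_assoc, ← pow_add, Nat.add_sub_cancel' hk']
  have hAB' : (z⁻¹) ^ m * (∑ k ∈ Finset.Icc m (n - m), (c k : ℂ) * (z⁻¹) ^ (k - m)) =
      ∑ k ∈ Finset.Icc m (n - m), (c k : ℂ) * (z⁻¹) ^ k := by
    rw [Finset.mul_sum]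
    refine Finset.sum_congr rfl fun k hk => ?_
    have hk' : m ≤ k := (Finset.mem_Icc.mp hk).1
    rw [← mul_assoc, mul_comm ((z⁻¹) ^ m), mul_assoc, ← pow_add, Nat.add_sub_cancel' hk']
  -- the sin sum for c
  have hCsin : (∑ k ∈ Finset.Icc m (n - m), (c k : ℂ) * z ^ k) -
      (∑ k ∈ Finset.Icc m (n - m), (c k : ℂ) * (z⁻¹) ^ k) =
      2 * Complex.I * ((∑ k ∈ Finset.Icc m (n - m), c k * Real.sin (k * x) : ℝ) : ℂ) := by
    push_cast
    rw [← Finset.sum_sub_distrib, Finset.mul_sum]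
    refine Finset.sum_congr rfl fun k _ => ?_
    rw [← mul_sub, hzdef, aux_sin x k]
    push_cast
    ring
  have h2m : ((2:ℂ) ^ m) ≠ 0 := pow_ne_zero _ two_ne_zero
  have hrepC := congrArg (fun r : ℝ => (r : ℂ)) (hrep x)
  simp only [Complex.ofReal_mul] at hrepC
  simp only [eval_sub, eval_mul, eval_finset_sum, eval_C, eval_pow, eval_X]
  rw [hA, hA']
  -- now pure algebra
  have hgoal : (∑ k ∈ Finset.Icc 1 n, (a k : ℂ) * z ^ k) - (∑ k ∈ Finset.Icc 1 n, (a k : ℂ) * (z⁻¹) ^ k)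
      = ((2:ℂ)^m)⁻¹ * ((z ^ m * 2 ^ m * ((∏ j ∈ Finset.Icc 1 m, (Real.cos x - Real.cos (t j)) : ℝ) : ℂ)) *
          (∑ k ∈ Finset.Icc m (n - m), (c k : ℂ) * z ^ (k - m)) -
        ((z⁻¹) ^ m * 2 ^ m * ((∏ j ∈ Finset.Icc 1 m, (Real.cos x - Real.cos (t j)) : ℝ) : ℂ)) *
          (∑ k ∈ Finset.Icc m (n - m), (c k : ℂ) * (z⁻¹) ^ (k - m))) := by
    rw [hP]
    have e1 : (z ^ m * 2 ^ m * ((∏ j ∈ Finset.Icc 1 m, (Real.cos x - Real.cos (t j)) : ℝ) : ℂ)) *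
          (∑ k ∈ Finset.Icc m (n - m), (c k : ℂ) * z ^ (k - m)) =
        2 ^ m * ((∏ j ∈ Finset.Icc 1 m, (Real.cos x - Real.cos (t j)) : ℝ) : ℂ) *
          (∑ k ∈ Finset.Icc m (n - m), (c k : ℂ) * z ^ k) := by
      rw [← hAB]; ring
    have e2 : ((z⁻¹) ^ m * 2 ^ m * ((∏ j ∈ Finset.Icc 1 m, (Real.cos x - Real.cos (t j)) : ℝ) : ℂ)) *
          (∑ k ∈ Finset.Icc m (n - m), (c k : ℂ) * (z⁻¹) ^ (k - m)) =
        2 ^ m * ((∏ j ∈ Finset.Icc 1 m, (Real.cos x - Real.cos (t j)) : ℝ) : ℂ) *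
          (∑ k ∈ Finset.Icc m (n - m), (c k : ℂ) * (z⁻¹) ^ k) := by
      rw [← hAB']; ring
    rw [e1, e2, ← mul_sub, ← mul_assoc, ← mul_assoc]
    rw [inv_mul_cancel₀ h2m, one_mul, hCsin, hrepC]
    ring
  linear_combination hgoal

open Polynomial in
private lemma aux_D_zero (n m : ℕ) (hm : 1 ≤ m) (hmn : 2 * m ≤ n) (a c : ℕ → ℝ) (t : ℕ → ℝ)
    (hrep : ∀ x : ℝ, ∑ k ∈ Finset.Icc 1 n, a k * Real.sin (k * x) =
      (∏ j ∈ Finset.Icc 1 m, (Real.cos x - Real.cos (t j))) *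
        ∑ k ∈ Finset.Icc m (n - m), c k * Real.sin (k * x)) :
    (∑ k ∈ Finset.Icc 1 n, C (a k : ℂ) * X ^ k) =
      C (((2:ℂ) ^ m)⁻¹) * ((∏ j ∈ Finset.Icc 1 m, ((X - C (Complex.exp (t j * Complex.I))) *
        (X - C ((Complex.exp (t j * Complex.I))⁻¹)))) *
        (∑ k ∈ Finset.Icc m (n - m), C (c k : ℂ) * X ^ (k - m)) - C (c m : ℂ)) := by
  set P : Polynomial ℂ := ∑ k ∈ Finset.Icc 1 n, C (a k : ℂ) * X ^ k with hPdef
  set A : Polynomial ℂ := ∏ j ∈ Finset.Icc 1 m, ((X - C (Complex.exp (t j * Complex.I))) *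
        (X - C ((Complex.exp (t j * Complex.I))⁻¹))) with hAdef
  set B : Polynomial ℂ := ∑ k ∈ Finset.Icc m (n - m), C (c k : ℂ) * X ^ (k - m) with hBdef
  set Q : Polynomial ℂ := C (((2:ℂ) ^ m)⁻¹) * (A * B - C (c m : ℂ)) with hQdef
  set D : Polynomial ℂ := P - Q with hDdef
  -- degree bound
  have hdegP : P.natDegree ≤ n := by
    refine natDegree_sum_le_of_forall_le _ _ fun k hk => ?_
    exact le_trans (natDegree_C_mul_X_pow_le _ _) (Finset.mem_Icc.mp hk).2
  have hdegA : A.natDegree ≤ 2 * m := by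
    have hj : ∀ j ∈ Finset.Icc 1 m, ((X - C (Complex.exp (t j * Complex.I))) *
        (X - C ((Complex.exp (t j * Complex.I))⁻¹))).natDegree ≤ 2 := fun j _ =>
      le_trans natDegree_mul_le (add_le_add (natDegree_X_sub_C_le _) (natDegree_X_sub_C_le _))
    refine le_trans (natDegree_prod_le _ _) (le_trans (Finset.sum_le_sum hj) ?_)
    simp [Nat.card_Icc, mul_comm]
  have hdegB : B.natDegree ≤ n - 2 * m := by
    refine natDegree_sum_le_of_forall_le _ _ fun k hk => ?_
    refine le_trans (natDegree_C_mul_X_pow_le _ _) ?_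
    have := (Finset.mem_Icc.mp hk).2
    omega
  have hdegQ : Q.natDegree ≤ n := by
    refine le_trans (natDegree_C_mul_le _ _) ?_
    refine le_trans (natDegree_sub_le _ _) ?_
    simp only [natDegree_C, max_le_iff]
    constructor
    · refine le_trans natDegree_mul_le ?_
      omega
    · omega
  have hdegD : D.natDegree ≤ n := le_trans (natDegree_sub_le _ _) (by omega)
  -- polynomial identity X^n * D = reflect n D
  have hpoint : ∀ x : ℝ, (X ^ n * D).eval (Complex.exp (x * Complex.I)) =
      (reflect n D).eval (Complex.exp (x * Complex.I)) := by
    intro x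
    set z : ℂ := Complex.exp (x * Complex.I) with hzdef
    have hz : z ≠ 0 := Complex.exp_ne_zero _
    have hkey : D.eval z = D.eval z⁻¹ := aux_key n m hmn a c t hrep x
    letI : Invertible (z⁻¹) := ⟨z, by field_simp, by field_simp⟩
    have h2 := Polynomial.eval₂_reflect_mul_pow (RingHom.id ℂ) (z⁻¹) n D hdegD
    rw [invOf_eq_inv, inv_inv] at h2
    have e1 : Polynomial.eval₂ (RingHom.id ℂ) z (reflect n D) = (reflect n D).eval z := rfl
    have e2 : Polynomial.eval₂ (RingHom.id ℂ) z⁻¹ D = D.eval z⁻¹ := rfl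
    rw [e1, e2, ← hkey] at h2
    rw [eval_mul, eval_pow, eval_X, ← h2]
    field_simp
    rw [one_div, inv_pow, mul_comm (z ^ n), mul_assoc, mul_inv_cancel₀ (pow_ne_zero _ hz), mul_one]
  have hpoly : X ^ n * D = reflect n D := by
    apply Polynomial.eq_of_infinite_eval_eq
    have hinj : Set.InjOn (fun x : ℝ => Complex.exp (x * Complex.I)) (Set.Ioo 0 1) := by
      intro x hx y hy hxy
      simp only at hxy
      have h1 : Complex.exp (x * Complex.I - y * Complex.I) = 1 := by
        rw [Complex.exp_sub, hxy, div_self (Complex.exp_ne_zero _)]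
      rw [Complex.exp_eq_one_iff] at h1
      obtain ⟨k, hk⟩ := h1
      have hk' : (x : ℂ) - y = k * (2 * Real.pi) := by
        have hI : (Complex.I : ℂ) ≠ 0 := Complex.I_ne_zero
        have h2 : ((x : ℂ) - y) * Complex.I = (k * (2 * Real.pi)) * Complex.I := by
          linear_combination hk
        exact mul_right_cancel₀ hI h2
      have hkR : x - y = k * (2 * Real.pi) := by exact_mod_cast hk'
      have hpi := Real.pi_gt_three
      have hk0 : k = 0 := by
        by_contra h
        have h1 : (1:ℝ) ≤ |(k:ℝ)| := by exact_mod_cast Int.one_le_abs (by simpa using h)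
        have h2 : |x - y| < 1 := by
          rw [abs_lt]
          constructor <;> [nlinarith [hx.1, hx.2, hy.1, hy.2]; nlinarith [hx.1, hx.2, hy.1, hy.2]]
        rw [hkR, abs_mul] at h2
        have : |2 * Real.pi| = 2 * Real.pi := abs_of_pos (by nlinarith)
        rw [this] at h2
        nlinarith
      rw [hk0] at hkR
      push_cast at hkR
      linarith
    have hinf : (Set.Ioo (0:ℝ) 1).Infinite := Set.Ioo_infinite (by norm_num)
    refine Set.Infinite.mono ?_ (hinf.image hinj)
    rintro _ ⟨x, _, rfl⟩
    exact hpoint x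
  -- coefficients of D vanish
  have hcoeff : ∀ k, 1 ≤ k → D.coeff k = 0 := by
    intro k hk
    have h1 := congrArg (fun p : Polynomial ℂ => p.coeff (k + n)) hpoly
    simp only [Polynomial.coeff_X_pow_mul, Polynomial.coeff_reflect] at h1
    rw [Polynomial.revAt_eq_self_of_lt (by omega)] at h1
    rw [h1]
    exact Polynomial.coeff_eq_zero_of_natDegree_lt (by omega)
  have hc0 : D.coeff 0 = 0 := by
    rw [Polynomial.coeff_zero_eq_eval_zero]
    have hP0 : P.eval 0 = 0 := by
      rw [hPdef]
      simp only [eval_finset_sum, eval_mul, eval_C, eval_pow, eval_X]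
      refine Finset.sum_eq_zero fun k hk => ?_
      have : 1 ≤ k := (Finset.mem_Icc.mp hk).1
      rw [zero_pow (by omega), mul_zero]
    have hA0 : A.eval 0 = 1 := by
      rw [hAdef, eval_prod]
      refine Finset.prod_eq_one fun j _ => ?_
      simp only [eval_mul, eval_sub, eval_X, eval_C, zero_sub, neg_mul_neg]
      exact mul_inv_cancel₀ (Complex.exp_ne_zero _)
    have hB0 : B.eval 0 = (c m : ℂ) := by
      rw [hBdef]
      simp only [eval_finset_sum, eval_mul, eval_C, eval_pow, eval_X]
      rw [Finset.sum_eq_single m]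
      · simp
      · intro k hk hkm
        have h1 : m ≤ k := (Finset.mem_Icc.mp hk).1
        rw [zero_pow (by omega), mul_zero]
      · intro h
        exact absurd (Finset.mem_Icc.mpr ⟨le_refl m, by omega⟩) h
    rw [hDdef, eval_sub, hP0, hQdef, eval_mul, eval_sub, eval_mul, hA0, hB0, eval_C, eval_C]
    simp
  have hD : D = 0 := by
    ext k
    rcases Nat.eq_zero_or_pos k with h | h
    · rw [h]; simpa using hc0
    · simpa using hcoeff k h
  have := sub_eq_zero.mp (hDdef ▸ hD)
  rw [hQdef] at this
  exact this

theorem stmt_9 (n m : ℕ) (hm : 2 ≤ m) (hmn : 2 * m ≤ n) (a c : ℕ → ℝ) (t : ℕ → ℝ)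
    (ht : ∀ j ∈ Finset.Icc 1 m, t j ∈ Set.Ioo 0 Real.pi)
    (hdist : ∀ i ∈ Finset.Icc 1 m, ∀ j ∈ Finset.Icc 1 m, t i = t j → i = j)
    (hrep : ∀ x : ℝ, ∑ k ∈ Finset.Icc 1 n, a k * Real.sin (k * x) =
      (∏ j ∈ Finset.Icc 1 m, (Real.cos x - Real.cos (t j))) *
        ∑ k ∈ Finset.Icc m (n - m), c k * Real.sin (k * x)) :
    ∀ j ∈ Finset.Icc 1 m,
      ∑ k ∈ Finset.Icc 1 n, a k * Real.cos (k * t j) = -c m / 2 ^ m := by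
  intro j hj
  have hm1 : 1 ≤ m := by omega
  have hD := aux_D_zero n m hm1 hmn a c t hrep
  set w : ℂ := Complex.exp (t j * Complex.I) with hwdef
  have hPQ := congrArg (Polynomial.eval w) hD
  have hPw : Polynomial.eval w (∑ k ∈ Finset.Icc 1 n, Polynomial.C (a k : ℂ) * Polynomial.X ^ k) =
      ∑ k ∈ Finset.Icc 1 n, (a k : ℂ) * w ^ k := by
    simp [Polynomial.eval_finset_sum]
  have hAw : Polynomial.eval w (∏ j' ∈ Finset.Icc 1 m,
      ((Polynomial.X - Polynomial.C (Complex.exp (t j' * Complex.I))) *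
        (Polynomial.X - Polynomial.C ((Complex.exp (t j' * Complex.I))⁻¹)))) = 0 := by
    rw [Polynomial.eval_prod]
    refine Finset.prod_eq_zero hj ?_
    simp [hwdef]
  have h2m : ((2:ℂ) ^ m) ≠ 0 := pow_ne_zero _ two_ne_zero
  have hfin : (∑ k ∈ Finset.Icc 1 n, (a k : ℂ) * w ^ k) = ((-c m / 2 ^ m : ℝ) : ℂ) := by
    rw [← hPw, hPQ]
    simp only [Polynomial.eval_mul, Polynomial.eval_sub, Polynomial.eval_C]
    rw [hAw, zero_mul]
    push_cast
    field_simp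
    ring
  have hre := congrArg Complex.re hfin
  rw [Complex.re_sum, Complex.ofReal_re] at hre
  have hterm : ∀ k ∈ Finset.Icc 1 n, ((a k : ℂ) * w ^ k).re = a k * Real.cos (k * t j) := by
    intro k _
    have hwk : w ^ k = Complex.exp ((k * t j : ℝ) * Complex.I) := by
      rw [hwdef, ← Complex.exp_nat_mul]
      push_cast
      ring_nf
    rw [hwk, aux_exp]
    simp only [Complex.mul_re, Complex.add_re, Complex.add_im, Complex.mul_im,
      Complex.ofReal_re, Complex.ofReal_im, Complex.I_re, Complex.I_im]
    push_cast
    ring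
  rw [Finset.sum_congr rfl hterm] at hre
  exact hre
end

section
/- Define a_j = 2 tan(π/(2(n+1))) · (1 - j/(n+1)) · sin(πj/(n+1)) for j = 1,...,n. Then Σ_{j=1}^n a_j = 1. -/
open Real Finset

theorem stmt_12 (n : ℕ) (hn : 1 ≤ n) :
    ∑ j ∈ Finset.Icc 1 n,
      2 * Real.tan (Real.pi / (2 * (n + 1))) * (1 - (j : ℝ) / (n + 1)) *
        Real.sin (Real.pi * j / (n + 1)) = 1 := by
  have hπ := Real.pi_pos
  set N : ℝ := (n : ℝ) + 1 with hN
  have hNpos : (0:ℝ) < N := by rw [hN]; positivity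
  set α : ℝ := Real.pi / (2 * N) with hα
  have hαpos : 0 < α := by rw [hα]; positivity
  have hαlt : α < Real.pi / 2 := by
    have h1 : (1:ℝ) ≤ (n:ℝ) := by exact_mod_cast hn
    rw [hα, div_lt_div_iff₀ (by positivity) (by norm_num), hN]
    nlinarith [mul_pos hπ (show (0:ℝ) < (n:ℝ) by linarith)]
  have hcos : 0 < Real.cos α := Real.cos_pos_of_mem_Ioo ⟨by linarith, hαlt⟩
  have hsin : 0 < Real.sin α := Real.sin_pos_of_pos_of_lt_pi hαpos (by linarith)
  have hNα : 2 * N * α = Real.pi := by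
    rw [hα]; field_simp
  set c : ℕ → ℝ := fun k => Real.cos ((2*(k:ℝ)+1)*α) with hc
  have key0 : ∑ k ∈ Finset.range (n+1), c k = 0 := by
    have hrefl := Finset.sum_range_reflect c (n+1)
    have hneg : ∀ k ∈ Finset.range (n+1), c (n + 1 - 1 - k) = - c k := by
      intro k hk
      have hk' : k ≤ n := Nat.lt_succ_iff.mp (Finset.mem_range.mp hk)
      have hcast : ((n + 1 - 1 - k : ℕ) : ℝ) = (n : ℝ) - k := by
        norm_num
        push_cast [hk']
        ring
      rw [hc]
      simp only [hcast]
      have harg : (2*((n:ℝ) - k)+1)*α = Real.pi - (2*(k:ℝ)+1)*α := by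
        rw [← hNα, hN]; ring
      rw [harg, Real.cos_pi_sub]
    rw [Finset.sum_congr rfl hneg, Finset.sum_neg_distrib] at hrefl
    linarith
  have hc0 : c 0 = Real.cos α := by rw [hc]; norm_num
  have shift : ∑ k ∈ Finset.range n, c (k+1) = - Real.cos α := by
    have h := Finset.sum_range_succ' c n
    rw [key0, hc0] at h
    linarith
  set G : ℕ → ℝ := fun k => (1 - ((k:ℝ)+1)/N) * c k with hG
  have tele : ∑ k ∈ Finset.range n, (G k - G (k+1)) = G 0 - G n :=
    Finset.sum_range_sub' G n
  have hGn : G n = 0 := by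
    rw [hG]
    simp only
    rw [hN]
    rw [div_self (by positivity)]
    ring
  have hG0 : G 0 = (1 - 1/N) * Real.cos α := by
    rw [hG]
    simp only [Nat.cast_zero, zero_add, hc0]
  have H : ∑ j ∈ Finset.Icc 1 n,
      (2 * Real.sin α * ((1 - (j:ℝ)/N) * Real.sin (Real.pi * j / N))) = Real.cos α := by
    rw [← Finset.Ico_add_one_right_eq_Icc, Finset.sum_Ico_eq_sum_range]
    norm_num
    have hterm : ∀ i ∈ Finset.range n,
        2 * Real.sin α * ((1 - (1 + (i:ℝ))/N) * Real.sin (Real.pi * (1 + (i:ℝ)) / N))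
          = (G i - G (i+1)) - (1/N) * c (i+1) := by
      intro i _
      have harg : Real.pi * ((1:ℝ)+(i:ℝ)) / N = (2*(i:ℝ)+2)*α := by
        rw [hα]; field_simp; ring
      rw [harg, hG, hc]
      simp only
      push_cast
      have hcc : Real.cos ((2*(i:ℝ)+1)*α) - Real.cos ((2*((i:ℝ)+1)+1)*α)
          = 2 * Real.sin ((2*(i:ℝ)+2)*α) * Real.sin α := by
        rw [Real.cos_sub_cos,
            show ((2*(i:ℝ)+1)*α + (2*((i:ℝ)+1)+1)*α)/2 = (2*(i:ℝ)+2)*α by ring,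
            show ((2*(i:ℝ)+1)*α - (2*((i:ℝ)+1)+1)*α)/2 = -α by ring,
            Real.sin_neg]
        ring
      linear_combination (((i:ℝ)+1)/N - 1) * hcc
    rw [Finset.sum_congr rfl hterm, Finset.sum_sub_distrib, tele, ← Finset.mul_sum, shift,
        hG0, hGn]
    field_simp
    ring
  have hfac : ∀ j ∈ Finset.Icc 1 n,
      2 * Real.tan α * (1 - (j:ℝ)/N) * Real.sin (Real.pi * j / N)
        = (1/Real.cos α) * (2 * Real.sin α * ((1 - (j:ℝ)/N) * Real.sin (Real.pi * j / N))) := by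
    intro j _
    rw [Real.tan_eq_sin_div_cos]
    field_simp
  rw [Finset.sum_congr rfl hfac, ← Finset.mul_sum, H]
  field_simp
end

section
/- With a_j = 2 tan(π/(2(n+1))) · (1 - j/(n+1)) · sin(πj/(n+1)) for j = 1,...,n, the sine polynomial S(t) = Σ_{j=1}^n a_j sin(jt) satisfies S(t) ≥ 0 for all t ∈ [0,π]. -/
set_option maxHeartbeats 1000000


open Real Finset

private lemma step_trig (b y : ℝ) :
    2 * sin y ^ 2 * cos (2 * b) = sin (b + y) ^ 2 - 2 * sin b ^ 2 + sin (b - y) ^ 2 := by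
  rw [sin_add, sin_sub, cos_two_mul]
  linear_combination (2 * sin y ^ 2) * sin_sq_add_cos_sq b - (2 * sin b ^ 2) * sin_sq_add_cos_sq y

private lemma inner_id (m : ℕ) (x : ℝ) :
    2 * sin (x / 2) ^ 2 * ∑ j ∈ Icc 1 m, cos (j * x) =
      sin (((m : ℝ) + 1) * x / 2) ^ 2 - sin ((m : ℝ) * x / 2) ^ 2 - sin (x / 2) ^ 2 := by
  induction m with
  | zero => norm_num
  | succ m ih =>
      rw [Finset.sum_Icc_succ_top (by omega : 1 ≤ m + 1), mul_add]
      push_cast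
      have h := step_trig (((m : ℝ) + 1) * x / 2) (x / 2)
      rw [show 2 * (((m : ℝ) + 1) * x / 2) = ((m : ℝ) + 1) * x by ring,
          show ((m : ℝ) + 1) * x / 2 + x / 2 = ((m : ℝ) + 1 + 1) * x / 2 by ring,
          show ((m : ℝ) + 1) * x / 2 - x / 2 = (m : ℝ) * x / 2 by ring] at h
      linear_combination ih + h

private lemma outer_id (n : ℕ) (x : ℝ) :
    2 * sin (x / 2) ^ 2 * ∑ j ∈ Icc 1 n, (((n : ℝ) + 1) - j) * cos (j * x) =
      sin (((n : ℝ) + 1) * x / 2) ^ 2 - ((n : ℝ) + 1) * sin (x / 2) ^ 2 := by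
  induction n with
  | zero => norm_num
  | succ n ih =>
      have split : ∑ j ∈ Icc 1 (n + 1), ((((n + 1 : ℕ) : ℝ)) + 1 - j) * cos (j * x)
          = (∑ j ∈ Icc 1 n, (((n : ℝ) + 1) - j) * cos (j * x))
            + ∑ j ∈ Icc 1 (n + 1), cos (j * x) := by
        have hb : ∀ j ∈ Icc 1 (n + 1), ((((n + 1 : ℕ) : ℝ)) + 1 - j) * cos (j * x)
            = (((n : ℝ) + 1) - j) * cos (j * x) + cos (j * x) := by
          intro j hj; push_cast; ring
        rw [Finset.sum_congr rfl hb, Finset.sum_add_distrib]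
        congr 1
        rw [Finset.sum_Icc_succ_top (by omega : 1 ≤ n + 1)]
        push_cast
        ring
      rw [split, mul_add, ih, inner_id (n + 1) x]
      push_cast
      ring

theorem stmt_14 (n : ℕ) (hn : 1 ≤ n) :
    ∀ t ∈ Set.Icc (0:ℝ) Real.pi,
      0 ≤ ∑ j ∈ Finset.Icc 1 n,
        2 * Real.tan (Real.pi / (2 * (n + 1))) * (1 - (j : ℝ) / (n + 1)) *
          Real.sin (Real.pi * j / (n + 1)) * Real.sin (j * t) := by
  intro t ht
  obtain ⟨ht0, htpi⟩ := ht
  have hpi := Real.pi_pos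
  set N : ℝ := (n : ℝ) + 1 with hN
  have hN2 : (2 : ℝ) ≤ N := by
    have : (1 : ℝ) ≤ (n : ℝ) := by exact_mod_cast hn
    rw [hN]; linarith
  have hNpos : (0 : ℝ) < N := by linarith
  have hN0 : N ≠ 0 := ne_of_gt hNpos
  set θ : ℝ := π / N with hθ
  have hθpos : 0 < θ := div_pos hpi hNpos
  have hθle : θ ≤ π / 2 := by
    rw [hθ, div_le_div_iff₀ hNpos (by norm_num)]
    nlinarith
  have hNθ : N * θ = π := by rw [hθ]; field_simp
  have key : ∀ j ∈ Finset.Icc 1 n,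
      2 * tan (π / (2 * N)) * (1 - (j : ℝ) / N) * sin (π * j / N) * sin (j * t)
        = tan (π / (2 * N)) / N *
            ((N - j) * cos (j * (t - θ)) - (N - j) * cos (j * (t + θ))) := by
    intro j hj
    have hπj : π * (j : ℝ) / N = (j : ℝ) * θ := by rw [hθ]; ring
    rw [hπj, show (j : ℝ) * (t - θ) = j * t - j * θ by ring,
        show (j : ℝ) * (t + θ) = j * t + j * θ by ring, cos_sub, cos_add]
    field_simp
    ring
  rw [Finset.sum_congr rfl key, ← Finset.mul_sum, Finset.sum_sub_distrib]
  have htanpos : 0 < tan (π / (2 * N)) := by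
    apply Real.tan_pos_of_pos_of_lt_pi_div_two
    · positivity
    · rw [div_lt_div_iff₀ (by linarith) (by norm_num)]
      nlinarith
  apply mul_nonneg (by positivity)
  rw [sub_nonneg]
  have E1 := outer_id n (t - θ)
  have E2 := outer_id n (t + θ)
  rw [← hN] at E1 E2
  have harg1 : N * (t - θ) / 2 = N * t / 2 - π / 2 := by rw [← hNθ]; ring
  have harg2 : N * (t + θ) / 2 = N * t / 2 + π / 2 := by rw [← hNθ]; ring
  rw [harg1, show sin (N * t / 2 - π / 2) = -cos (N * t / 2) by rw [sin_sub]; simp, neg_sq] at E1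
  rw [harg2, show sin (N * t / 2 + π / 2) = cos (N * t / 2) by rw [sin_add]; simp] at E2
  set A1 := ∑ j ∈ Finset.Icc 1 n, (N - (j : ℝ)) * cos (j * (t - θ)) with hA1def
  set A2 := ∑ j ∈ Finset.Icc 1 n, (N - (j : ℝ)) * cos (j * (t + θ)) with hA2def
  have hs2pos : 0 < sin ((t + θ) / 2) :=
    Real.sin_pos_of_pos_of_lt_pi (by linarith) (by linarith)
  have hdiff : sin ((t + θ) / 2) ^ 2 - sin ((t - θ) / 2) ^ 2 = sin t * sin θ := by
    have h1 := Real.sin_two_mul (t / 2)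
    have h2 := Real.sin_two_mul (θ / 2)
    rw [show 2 * (t / 2) = t by ring] at h1
    rw [show 2 * (θ / 2) = θ by ring] at h2
    rw [show (t + θ) / 2 = t / 2 + θ / 2 by ring, show (t - θ) / 2 = t / 2 - θ / 2 by ring,
        sin_add, sin_sub, h1, h2]
    ring
  have hsint : 0 ≤ sin t := Real.sin_nonneg_of_nonneg_of_le_pi ht0 htpi
  have hsinθ : 0 < sin θ := Real.sin_pos_of_pos_of_lt_pi hθpos (by linarith)
  have hdiff' : sin ((t - θ) / 2) ^ 2 ≤ sin ((t + θ) / 2) ^ 2 := by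
    nlinarith [mul_nonneg hsint hsinθ.le]
  by_cases hc : t = θ
  · have hA1 : A1 = ∑ j ∈ Finset.Icc 1 n, (N - (j : ℝ)) := by
      rw [hA1def]
      apply Finset.sum_congr rfl
      intro j hj
      rw [hc]
      simp
    have hA1nn : 0 ≤ ∑ j ∈ Finset.Icc 1 n, (N - (j : ℝ)) := by
      apply Finset.sum_nonneg
      intro j hj
      have hj2 := (Finset.mem_Icc.mp hj).2
      have : (j : ℝ) ≤ n := by exact_mod_cast hj2
      rw [hN]; linarith
    have hC : cos (N * t / 2) = 0 := by
      rw [hc, show N * θ / 2 = π / 2 by rw [← hNθ]]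
      exact Real.cos_pi_div_two
    rw [hC] at E2
    rw [hA1]
    nlinarith [E2, mul_pos hs2pos hs2pos, hA1nn, hNpos]
  · have h1 : -π < (t - θ) / 2 := by linarith
    have h2 : (t - θ) / 2 < π := by linarith
    have hs1 : sin ((t - θ) / 2) ≠ 0 := by
      intro h0
      have := (Real.sin_eq_zero_iff_of_lt_of_lt h1 h2).mp h0
      apply hc; linarith
    have hs1sq : 0 < sin ((t - θ) / 2) ^ 2 :=
      lt_of_le_of_ne (sq_nonneg _) (Ne.symm (pow_ne_zero 2 hs1))
    have hs2sq : 0 < sin ((t + θ) / 2) ^ 2 := pow_pos hs2pos 2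
    have keyq : 2 * (sin ((t - θ) / 2) ^ 2 * sin ((t + θ) / 2) ^ 2) * (A1 - A2)
        = cos (N * t / 2) ^ 2 * (sin ((t + θ) / 2) ^ 2 - sin ((t - θ) / 2) ^ 2) := by
      linear_combination sin ((t + θ) / 2) ^ 2 * E1 - sin ((t - θ) / 2) ^ 2 * E2
    have hq : 0 < 2 * (sin ((t - θ) / 2) ^ 2 * sin ((t + θ) / 2) ^ 2) := by positivity
    have hR : 0 ≤ cos (N * t / 2) ^ 2 * (sin ((t + θ) / 2) ^ 2 - sin ((t - θ) / 2) ^ 2) :=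
      mul_nonneg (sq_nonneg _) (by linarith)
    rw [← keyq] at hR
    have := (mul_nonneg_iff_of_pos_left hq).mp hR
    linarith
end

section
/- With a_j = 2 tan(π/(2(n+1))) · (1 - j/(n+1)) · sin(πj/(n+1)) for j = 1,...,n, the cosine polynomial C(t) = Σ_{j=1}^n a_j cos(jt) satisfies C(π) = Σ_{j=1}^n (-1)^j a_j = -tan²(π/(2(n+1))). -/
open Real Finset

theorem stmt_15 (n : ℕ) (hn : 1 ≤ n) :
    (∑ j ∈ Finset.Icc 1 n,
        2 * Real.tan (Real.pi / (2 * (n + 1))) * (1 - (j : ℝ) / (n + 1)) *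
          Real.sin (Real.pi * j / (n + 1)) * Real.cos (j * Real.pi) =
      ∑ j ∈ Finset.Icc 1 n,
        (-1 : ℝ) ^ j * (2 * Real.tan (Real.pi / (2 * (n + 1))) *
          (1 - (j : ℝ) / (n + 1)) * Real.sin (Real.pi * j / (n + 1)))) ∧
    ∑ j ∈ Finset.Icc 1 n,
        2 * Real.tan (Real.pi / (2 * (n + 1))) * (1 - (j : ℝ) / (n + 1)) *
          Real.sin (Real.pi * j / (n + 1)) * Real.cos (j * Real.pi) =
      -Real.tan (Real.pi / (2 * (n + 1))) ^ 2 := by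
  have hcosj : ∀ j : ℕ, Real.cos ((j : ℝ) * Real.pi) = (-1 : ℝ) ^ j := by
    intro j
    have := Real.cos_add_nat_mul_pi 0 j
    simpa using this
  have part1 :
      (∑ j ∈ Finset.Icc 1 n,
        2 * Real.tan (Real.pi / (2 * (n + 1))) * (1 - (j : ℝ) / (n + 1)) *
          Real.sin (Real.pi * j / (n + 1)) * Real.cos (j * Real.pi) =
      ∑ j ∈ Finset.Icc 1 n,
        (-1 : ℝ) ^ j * (2 * Real.tan (Real.pi / (2 * (n + 1))) *
          (1 - (j : ℝ) / (n + 1)) * Real.sin (Real.pi * j / (n + 1)))) := by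
    refine Finset.sum_congr rfl fun j _ => ?_
    rw [hcosj j]; ring
  set θ : ℝ := Real.pi / (2 * (n + 1)) with hθ
  have hN : ((n : ℝ) + 1) ≠ 0 := by positivity
  have hn1 : (1 : ℝ) < (n : ℝ) + 1 := by
    have : (1 : ℝ) ≤ (n : ℝ) := by exact_mod_cast hn
    linarith
  have hθpos : 0 < θ := by
    rw [hθ]; positivity
  have hθlt : θ < Real.pi / 2 := by
    rw [hθ, div_lt_div_iff₀ (by positivity) (by norm_num)]
    nlinarith [Real.pi_pos]
  have hcos : 0 < Real.cos θ := Real.cos_pos_of_mem_Ioo ⟨by linarith, hθlt⟩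
  have hc : Real.cos θ ≠ 0 := ne_of_gt hcos
  -- the telescoping function
  set F : ℕ → ℝ := fun j =>
    (-1 : ℝ) ^ j * (((n : ℝ) + 1 - j) * Real.sin ((2 * j + 1) * θ) / (2 * Real.cos θ)
      - Real.sin (2 * j * θ) / (4 * Real.cos θ ^ 2)) with hF
  have step : ∀ i : ℕ,
      (-1 : ℝ) ^ (i + 1) * (((n : ℝ) + 1 - ((i : ℝ) + 1)) * Real.sin (2 * ((i : ℝ) + 1) * θ))
        = F (i + 1) - F i := by
    intro i
    rw [hF]
    push_cast
    have e1 : (2 * ((i : ℝ) + 1) + 1) * θ = 2 * ((i : ℝ) + 1) * θ + θ := by ring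
    have e2 : (2 * (i : ℝ) + 1) * θ = 2 * ((i : ℝ) + 1) * θ - θ := by ring
    have e3 : 2 * (i : ℝ) * θ = 2 * ((i : ℝ) + 1) * θ - 2 * θ := by ring
    rw [e1, e2, e3, Real.sin_add, Real.sin_sub, Real.sin_sub, Real.sin_two_mul,
      Real.cos_two_mul, pow_succ]
    field_simp
    ring
  have hF0 : F 0 = ((n : ℝ) + 1) * Real.sin θ / (2 * Real.cos θ) := by
    simp [hF]
  have hFn : F n = 0 := by
    have a1 : (2 * (n : ℝ) + 1) * θ = Real.pi - θ := by
      rw [hθ]; field_simp; ring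
    have a2 : 2 * (n : ℝ) * θ = Real.pi - 2 * θ := by
      rw [hθ]; field_simp; ring
    rw [hF]
    simp only [a1, a2, Real.sin_pi_sub]
    rw [Real.sin_two_mul]
    have : ((n : ℝ) + 1 - n) * Real.sin θ / (2 * Real.cos θ)
        - 2 * Real.sin θ * Real.cos θ / (4 * Real.cos θ ^ 2) = 0 := by
      field_simp
      ring
    rw [this, mul_zero]
  have sum_tel :
      ∑ j ∈ Finset.Icc 1 n, (-1 : ℝ) ^ j * (((n : ℝ) + 1 - j) * Real.sin (2 * j * θ))
        = -(((n : ℝ) + 1) * Real.sin θ / (2 * Real.cos θ)) := by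
    rw [← Finset.Ico_add_one_right_eq_Icc, Finset.sum_Ico_eq_sum_range]
    simp only [Nat.add_sub_cancel]
    have : ∀ i ∈ Finset.range n,
        (-1 : ℝ) ^ (1 + i) * (((n : ℝ) + 1 - (↑(1 + i) : ℝ)) * Real.sin (2 * (↑(1 + i) : ℝ) * θ))
          = F (i + 1) - F i := by
      intro i _
      rw [add_comm 1 i]
      push_cast
      exact step i
    rw [Finset.sum_congr rfl this, Finset.sum_range_sub F n, hF0, hFn]
    ring
  refine ⟨part1, ?_⟩
  rw [part1]
  have term_eq : ∀ j ∈ Finset.Icc 1 n,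
      (-1 : ℝ) ^ j * (2 * Real.tan θ * (1 - (j : ℝ) / (n + 1)) * Real.sin (Real.pi * j / (n + 1)))
        = (2 * Real.sin θ / (((n : ℝ) + 1) * Real.cos θ)) *
            ((-1 : ℝ) ^ j * (((n : ℝ) + 1 - j) * Real.sin (2 * j * θ))) := by
    intro j _
    have hang : Real.pi * j / ((n : ℝ) + 1) = 2 * j * θ := by
      rw [hθ]; field_simp
    rw [hang, Real.tan_eq_sin_div_cos]
    field_simp
  rw [Finset.sum_congr rfl term_eq, ← Finset.mul_sum, sum_tel, Real.tan_eq_sin_div_cos]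
  field_simp
end

section
/- Let γ_1,...,γ_n be real numbers such that the polynomial γ_1 + 2γ_2 cos t + 2γ_3 cos 2t + ... + 2γ_n cos(n-1)t is nonnegative for all real t. Then |γ_2| ≤ cos(π/(n+1)) · |γ_1| (Fejér's inequality). -/
open Real Finset

lemma fejer_tele (N : ℕ) (x : ℝ) :
    ∑ j ∈ Finset.range N, 2 * Real.sin x * Real.cos ((2 * (j : ℝ) + 1) * x)
      = Real.sin (2 * N * x) := by
  induction N with
  | zero => simp
  | succ m ih =>
    rw [Finset.sum_range_succ, ih]
    push_cast
    rw [show (2 : ℝ) * m * x = (2 * m + 1) * x - x by ring,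
      show (2 : ℝ) * (m + 1) * x = (2 * m + 1) * x + x by ring,
      Real.sin_add, Real.sin_sub]
    ring

lemma fejer_van (N r : ℕ) (hr0 : 0 < r) (hrN : r < N) :
    ∑ j ∈ Finset.range N, Real.cos ((2 * (j : ℝ) + 1) * (r * (π / N))) = 0 := by
  have hNpos : (0 : ℝ) < N := by
    exact_mod_cast Nat.lt_of_lt_of_le hr0 hrN.le
  set x : ℝ := r * (π / N) with hx
  have hrpos : (0 : ℝ) < r := by exact_mod_cast hr0
  have hx0 : 0 < x := by
    rw [hx]; positivity
  have hxπ : x < π := by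
    rw [hx, mul_div_assoc', div_lt_iff₀ hNpos]
    have : (r : ℝ) < N := by exact_mod_cast hrN
    nlinarith [Real.pi_pos]
  have hs : Real.sin x ≠ 0 := ne_of_gt (Real.sin_pos_of_pos_of_lt_pi hx0 hxπ)
  have h := fejer_tele N x
  have h2 : Real.sin (2 * N * x) = 0 := by
    have : (2 : ℝ) * N * x = (2 * r : ℕ) * π := by
      push_cast
      field_simp [hx]
      rw [hx]; field_simp
    rw [this, Real.sin_nat_mul_pi]
  rw [h2, ← Finset.mul_sum] at h
  rcases mul_eq_zero.mp h with h' | h'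
  · exact absurd h' (by simpa using hs)
  · exact h'

lemma fejer_core (n : ℕ) (hn : 2 ≤ n) (γ : ℕ → ℝ)
    (hpos : ∀ t : ℝ,
      0 ≤ γ 1 + ∑ k ∈ Finset.Icc 2 n, 2 * γ k * Real.cos ((k - 1 : ℕ) * t)) :
    γ 2 ≤ Real.cos (π / (n + 1)) * γ 1 := by
  set N : ℕ := n + 1 with hNdef
  set θ : ℝ := π / (n + 1) with hθdef
  have hNcast : ((N : ℝ)) = (n : ℝ) + 1 := by rw [hNdef]; push_cast; ring
  have hNpos : (0 : ℝ) < N := by rw [hNcast]; positivity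
  have hN3 : 3 ≤ N := by omega
  have hθpos : 0 < θ := by rw [hθdef]; positivity
  have hθlt : θ < π / 2 := by
    rw [hθdef, div_lt_div_iff₀ (by positivity) (by norm_num)]
    have : (3 : ℝ) ≤ (n : ℝ) + 1 := by
      have h3 : (3 : ℕ) ≤ n + 1 := by omega
      exact_mod_cast h3
    nlinarith [Real.pi_pos]
  have hcosθ : 0 < Real.cos θ := Real.cos_pos_of_mem_Ioo ⟨by linarith, hθlt⟩
  have hNθ : (N : ℝ) * θ = π := by
    rw [hθdef, hNcast]; field_simp
  set u : ℕ → ℝ := fun j => (2 * (j : ℝ) + 1) * θ with hu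
  -- vanishing sums
  have hC : ∀ r : ℕ, 0 < r → r < N →
      ∑ j ∈ Finset.range N, Real.cos ((r : ℝ) * u j) = 0 := by
    intro r hr0 hrN
    rw [← fejer_van N r hr0 hrN]
    apply Finset.sum_congr rfl
    intro j _
    congr 1
    rw [hu]
    simp only []
    rw [hθdef, hNcast]
    ring
  -- S1
  have hS1 : ∑ j ∈ Finset.range N,
      (γ 1 + ∑ k ∈ Finset.Icc 2 n, 2 * γ k * Real.cos ((k - 1 : ℕ) * u j))
      = N * γ 1 := by
    rw [Finset.sum_add_distrib, Finset.sum_const, Finset.card_range, nsmul_eq_mul]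
    have hz : ∑ j ∈ Finset.range N, ∑ k ∈ Finset.Icc 2 n,
        2 * γ k * Real.cos ((k - 1 : ℕ) * u j) = 0 := by
      rw [Finset.sum_comm]
      apply Finset.sum_eq_zero
      intro k hk
      obtain ⟨hk2, hkn⟩ := Finset.mem_Icc.mp hk
      rw [← Finset.mul_sum, hC (k - 1) (by omega) (by omega)]
      ring
    rw [hz]; ring
  -- inner products
  have hinner : ∀ k ∈ Finset.Icc 2 n,
      ∑ j ∈ Finset.range N, Real.cos (u j) * Real.cos ((k - 1 : ℕ) * u j)
        = if k = 2 then (N : ℝ) / 2 else 0 := by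
    intro k hk
    obtain ⟨hk2, hkn⟩ := Finset.mem_Icc.mp hk
    obtain ⟨m, rfl⟩ : ∃ m, k = m + 2 := ⟨k - 2, by omega⟩
    have hstep : ∀ j, Real.cos (u j) * Real.cos ((m + 2 - 1 : ℕ) * u j)
        = Real.cos (((m : ℝ) + 2) * u j) * (2⁻¹ : ℝ)
          + Real.cos ((m : ℝ) * u j) * (2⁻¹ : ℝ) := by
      intro j
      have h1 : ((m + 2 - 1 : ℕ) : ℝ) = (m : ℝ) + 1 := by
        push_cast [Nat.add_sub_cancel]; ring
      rw [h1,
        show ((m : ℝ) + 2) * u j = ((m : ℝ) + 1) * u j + u j by ring,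
        show (m : ℝ) * u j = ((m : ℝ) + 1) * u j - u j by ring,
        Real.cos_add, Real.cos_sub]
      ring
    rw [Finset.sum_congr rfl fun j _ => hstep j, Finset.sum_add_distrib,
      ← Finset.sum_mul, ← Finset.sum_mul]
    have hA : ∑ j ∈ Finset.range N, Real.cos (((m : ℝ) + 2) * u j) = 0 := by
      have h := hC (m + 2) (by omega) (by omega)
      push_cast at h
      exact h
    rcases Nat.eq_zero_or_pos m with rfl | hm
    · rw [if_pos rfl, hA]
      simp only [Nat.cast_zero, zero_mul, Real.cos_zero]
      rw [Finset.sum_const, Finset.card_range, nsmul_eq_mul]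
      ring
    · rw [if_neg (by omega), hA]
      have hB : ∑ j ∈ Finset.range N, Real.cos ((m : ℝ) * u j) = 0 :=
        hC m hm (by omega)
      rw [hB]
      ring
  -- S2
  have hS2 : ∑ j ∈ Finset.range N, Real.cos (u j) *
      (γ 1 + ∑ k ∈ Finset.Icc 2 n, 2 * γ k * Real.cos ((k - 1 : ℕ) * u j))
      = N * γ 2 := by
    have hexp : ∀ j, Real.cos (u j) *
        (γ 1 + ∑ k ∈ Finset.Icc 2 n, 2 * γ k * Real.cos ((k - 1 : ℕ) * u j))
        = Real.cos (u j) * γ 1 + ∑ k ∈ Finset.Icc 2 n,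
            2 * γ k * (Real.cos (u j) * Real.cos ((k - 1 : ℕ) * u j)) := by
      intro j
      rw [mul_add, Finset.mul_sum]
      congr 1
      apply Finset.sum_congr rfl
      intro k _
      ring
    rw [Finset.sum_congr rfl fun j _ => hexp j, Finset.sum_add_distrib]
    have h1 : ∑ j ∈ Finset.range N, Real.cos (u j) * γ 1 = 0 := by
      rw [← Finset.sum_mul]
      have h := hC 1 (by omega) (by omega)
      push_cast at h
      simp only [one_mul] at h
      rw [h]; ring
    have h2 : ∑ j ∈ Finset.range N, ∑ k ∈ Finset.Icc 2 n,
        2 * γ k * (Real.cos (u j) * Real.cos ((k - 1 : ℕ) * u j)) = N * γ 2 := by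
      rw [Finset.sum_comm]
      have hpt : ∀ k ∈ Finset.Icc 2 n, ∑ j ∈ Finset.range N,
          2 * γ k * (Real.cos (u j) * Real.cos ((k - 1 : ℕ) * u j))
          = if k = 2 then (N : ℝ) * γ 2 else 0 := by
        intro k hk
        rw [← Finset.mul_sum, hinner k hk]
        split_ifs with h
        · subst h; ring
        · ring
      rw [Finset.sum_congr rfl hpt, Finset.sum_ite_eq' (Finset.Icc 2 n) 2
        (fun _ => (N : ℝ) * γ 2), if_pos (Finset.mem_Icc.mpr ⟨le_refl 2, hn⟩)]
    rw [h1, h2]; ring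
  -- weights are nonnegative
  have hcosu : ∀ j ∈ Finset.range N, Real.cos (u j) ≤ Real.cos θ := by
    intro j hj
    have hjN : (j : ℝ) + 1 ≤ (N : ℝ) := by exact_mod_cast Finset.mem_range.mp hj
    have hjnn : (0 : ℝ) ≤ (j : ℝ) := Nat.cast_nonneg j
    have h1 : θ ≤ u j := by
      rw [hu]; simp only []; nlinarith
    have h2 : u j ≤ 2 * π - θ := by
      rw [hu]; simp only []; nlinarith
    rcases le_or_gt (u j) π with h | h
    · exact Real.cos_le_cos_of_nonneg_of_le_pi hθpos.le h h1
    · rw [← Real.cos_two_pi_sub (u j)]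
      exact Real.cos_le_cos_of_nonneg_of_le_pi hθpos.le (by linarith) (by linarith)
  -- the key nonnegative combination
  have hkey : 0 ≤ ∑ j ∈ Finset.range N, (1 - Real.cos (u j) / Real.cos θ) *
      (γ 1 + ∑ k ∈ Finset.Icc 2 n, 2 * γ k * Real.cos ((k - 1 : ℕ) * u j)) := by
    apply Finset.sum_nonneg
    intro j hj
    apply mul_nonneg
    · rw [sub_nonneg, div_le_one hcosθ]
      exact hcosu j hj
    · exact hpos (u j)
  have hsplit : ∑ j ∈ Finset.range N, (1 - Real.cos (u j) / Real.cos θ) *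
      (γ 1 + ∑ k ∈ Finset.Icc 2 n, 2 * γ k * Real.cos ((k - 1 : ℕ) * u j))
      = (N : ℝ) * γ 1 - ((N : ℝ) * γ 2) / Real.cos θ := by
    have hpt : ∀ j, (1 - Real.cos (u j) / Real.cos θ) *
        (γ 1 + ∑ k ∈ Finset.Icc 2 n, 2 * γ k * Real.cos ((k - 1 : ℕ) * u j))
        = (γ 1 + ∑ k ∈ Finset.Icc 2 n, 2 * γ k * Real.cos ((k - 1 : ℕ) * u j))
          - (Real.cos (u j) *
            (γ 1 + ∑ k ∈ Finset.Icc 2 n, 2 * γ k * Real.cos ((k - 1 : ℕ) * u j)))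
            / Real.cos θ := by
      intro j
      field_simp
      have e : ∀ x : ℕ, u j * (x : ℝ) = (x : ℝ) * u j := fun x => mul_comm _ _
      simp only [e]
    rw [Finset.sum_congr rfl fun j _ => hpt j, Finset.sum_sub_distrib,
      ← Finset.sum_div, hS1, hS2]
  rw [hsplit] at hkey
  have h4 : (N : ℝ) * γ 2 / Real.cos θ ≤ (N : ℝ) * γ 1 := by linarith
  rw [div_le_iff₀ hcosθ] at h4
  nlinarith [h4, hNpos]

theorem stmt_16 (n : ℕ) (hn : 2 ≤ n) (γ : ℕ → ℝ)
    (hpos : ∀ t : ℝ,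
      0 ≤ γ 1 + ∑ k ∈ Finset.Icc 2 n, 2 * γ k * Real.cos ((k - 1 : ℕ) * t)) :
    |γ 2| ≤ Real.cos (Real.pi / (n + 1)) * |γ 1| := by
  have hplus : γ 2 ≤ Real.cos (π / (n + 1)) * γ 1 := fejer_core n hn γ hpos
  -- apply the core lemma to the shifted/negated coefficients
  set γ' : ℕ → ℝ := fun k => (-1 : ℝ) ^ (k + 1) * γ k with hγ'
  have hγ'1 : γ' 1 = γ 1 := by simp [hγ']
  have hγ'2 : γ' 2 = -γ 2 := by simp [hγ']; ring
  have hpos' : ∀ t : ℝ,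
      0 ≤ γ' 1 + ∑ k ∈ Finset.Icc 2 n, 2 * γ' k * Real.cos ((k - 1 : ℕ) * t) := by
    intro t
    have h := hpos (t + π)
    rw [hγ'1]
    have hterm : ∀ k ∈ Finset.Icc 2 n,
        2 * γ k * Real.cos ((k - 1 : ℕ) * (t + π))
        = 2 * γ' k * Real.cos ((k - 1 : ℕ) * t) := by
      intro k hk
      obtain ⟨hk2, hkn⟩ := Finset.mem_Icc.mp hk
      obtain ⟨m, rfl⟩ : ∃ m, k = m + 2 := ⟨k - 2, by omega⟩
      have h1 : ((m + 2 - 1 : ℕ) : ℝ) = (m : ℝ) + 1 := by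
        push_cast [Nat.add_sub_cancel]; ring
      rw [h1, hγ']
      simp only []
      rw [show ((m : ℝ) + 1) * (t + π) = ((m : ℝ) + 1) * t + (m + 1 : ℕ) * π by
        push_cast; ring, Real.cos_add, Real.sin_nat_mul_pi]
      have hc : Real.cos (((m + 1 : ℕ) : ℝ) * π) = (-1 : ℝ) ^ (m + 1) := by
        have := Real.cos_nat_mul_pi_sub 0 (m + 1)
        simpa using this
      rw [hc]
      have hpow : (-1 : ℝ) ^ (m + 2 + 1) = (-1 : ℝ) ^ (m + 1) := by
        ring
      rw [hpow]
      ring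
    rw [← Finset.sum_congr rfl hterm]
    exact h
  have hminus : -γ 2 ≤ Real.cos (π / (n + 1)) * γ 1 := by
    have := fejer_core n hn γ' hpos'
    rw [hγ'1, hγ'2] at this
    exact this
  have hcosθ : 0 < Real.cos (π / ((n : ℝ) + 1)) := by
    apply Real.cos_pos_of_mem_Ioo
    constructor
    · have h0 : (0 : ℝ) < π / ((n : ℝ) + 1) := by positivity
      have := Real.pi_pos
      linarith
    · rw [div_lt_div_iff₀ (by positivity) (by norm_num)]
      have h3 : (3 : ℝ) ≤ (n : ℝ) + 1 := by
        have h3' : (3 : ℕ) ≤ n + 1 := by omega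
        exact_mod_cast h3'
      nlinarith [Real.pi_pos]
  have hγ1 : 0 ≤ γ 1 := by
    by_contra hneg
    push_neg at hneg
    have h1 : Real.cos (π / ((n : ℝ) + 1)) * γ 1 < 0 :=
      mul_neg_of_pos_of_neg hcosθ hneg
    have h2 : γ 2 < 0 := lt_of_le_of_lt hplus h1
    have h3 : -γ 2 < 0 := lt_of_le_of_lt hminus h1
    linarith
  rw [abs_of_nonneg hγ1, abs_le]
  constructor <;> linarith
end

section
/- Let a_1,...,a_n be real with Σ_{j=1}^n a_j = 1, and define γ_s = Σ_{j≡s mod 2, s ≤ j ≤ n} a_j for s = 1,...,n. Then Σ_{j=1}^n a_j sin(jt) = sin t · (γ_1 + 2 Σ_{k=2}^n γ_k cos((k-1)t)) for all t, and Σ_{j=1}^n (-1)^j a_j = -γ_1 + γ_2, and γ_1 + γ_2 = 1. -/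
open Real Finset

lemma aux_sin_s19 (t : ℝ) : ∀ j : ℕ, 1 ≤ j →
    Real.sin (j*t) = Real.sin t * ((if j % 2 = 1 then (1:ℝ) else 0)
      + 2 * ∑ k ∈ (Finset.Icc 2 j).filter (fun k => k % 2 = j % 2),
          Real.cos ((k-1 : ℕ)*t)) := by
  intro j
  induction j using Nat.strong_induction_on with
  | _ j ih =>
    intro hj
    match j, hj with
    | 1, _ => simp
    | 2, _ =>
      rw [show ((2:ℕ):ℝ) = 2 by norm_num, two_mul, Real.sin_add]
      norm_num [Finset.sum_filter, Finset.Icc_self]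
      ring
    | (m+3), _ =>
      have ihm := ih (m+1) (by omega) (by omega)
      have key : Real.sin ((m+3:ℕ)*t) = Real.sin ((m+1:ℕ)*t)
          + 2 * Real.sin t * Real.cos ((m+2:ℕ)*t) := by
        have e1 : ((m+3:ℕ):ℝ)*t = ((m+2:ℕ):ℝ)*t + t := by push_cast; ring
        have e2 : ((m+1:ℕ):ℝ)*t = ((m+2:ℕ):ℝ)*t - t := by push_cast; ring
        rw [e1, e2, Real.sin_add, Real.sin_sub]; ring
      rw [key, ihm]
      have hpar : (m+3) % 2 = (m+1) % 2 := by omega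
      have hset : (Finset.Icc 2 (m+3)).filter (fun k => k % 2 = (m+3) % 2)
          = insert (m+3) ((Finset.Icc 2 (m+1)).filter (fun k => k % 2 = (m+1) % 2)) := by
        ext k
        simp only [Finset.mem_filter, Finset.mem_insert, Finset.mem_Icc]
        omega
      rw [hset, Finset.sum_insert (by simp only [Finset.mem_filter, Finset.mem_Icc]; omega)]
      have h3 : (m+3) - 1 = m + 2 := by omega
      rw [h3, hpar]
      ring

theorem stmt_19 (n : ℕ) (hn : 1 ≤ n) (a γ : ℕ → ℝ)
    (ha : ∑ j ∈ Finset.Icc 1 n, a j = 1)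
    (hγ : ∀ s, 1 ≤ s →
      γ s = ∑ j ∈ (Finset.Icc s n).filter (fun j => j % 2 = s % 2), a j) :
    (∀ t : ℝ, ∑ j ∈ Finset.Icc 1 n, a j * Real.sin (j * t) =
      Real.sin t * (γ 1 + 2 * ∑ k ∈ Finset.Icc 2 n, γ k * Real.cos ((k - 1 : ℕ) * t))) ∧
    (∑ j ∈ Finset.Icc 1 n, (-1 : ℝ) ^ j * a j = -γ 1 + γ 2) ∧
    γ 1 + γ 2 = 1 := by
  have hγ1 : γ 1 = ∑ j ∈ Finset.Icc 1 n, (if j % 2 = 1 then a j else 0) := by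
    rw [hγ 1 le_rfl, Finset.sum_filter]
  have hγ2 : γ 2 = ∑ j ∈ Finset.Icc 1 n, (if j % 2 = 0 then a j else 0) := by
    rw [hγ 2 (by omega), Finset.sum_filter]
    apply Finset.sum_subset
    · intro x hx; simp only [Finset.mem_Icc] at *; omega
    · intro x hx hx2
      simp only [Finset.mem_Icc] at hx hx2
      have : x = 1 := by omega
      simp [this]
  refine ⟨?_, ?_, ?_⟩
  · intro t
    have step1 : ∀ j ∈ Finset.Icc 1 n, a j * Real.sin (j * t)
        = Real.sin t * (if j % 2 = 1 then a j else 0)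
          + 2 * Real.sin t * ∑ k ∈ Finset.Icc 2 n,
              (if k ≤ j ∧ k % 2 = j % 2 then a j * Real.cos ((k-1:ℕ)*t) else 0) := by
      intro j hj
      simp only [Finset.mem_Icc] at hj
      rw [aux_sin_s19 t j hj.1]
      have hset2 : (Finset.Icc 2 j).filter (fun k => k % 2 = j % 2)
          = (Finset.Icc 2 n).filter (fun k => k ≤ j ∧ k % 2 = j % 2) := by
        ext k
        simp only [Finset.mem_filter, Finset.mem_Icc]
        omega
      rw [hset2, Finset.sum_filter]
      rw [show (∑ k ∈ Finset.Icc 2 n, if k ≤ j ∧ k % 2 = j % 2 then a j * Real.cos ((k-1:ℕ)*t) else 0)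
          = a j * ∑ k ∈ Finset.Icc 2 n, (if k ≤ j ∧ k % 2 = j % 2 then Real.cos ((k-1:ℕ)*t) else 0) from by
        rw [Finset.mul_sum]; exact Finset.sum_congr rfl (fun k _ => by split <;> simp)]
      split <;> ring
    rw [Finset.sum_congr rfl step1, Finset.sum_add_distrib, ← Finset.mul_sum, ← Finset.mul_sum,
      ← hγ1]
    have hswap : (∑ j ∈ Finset.Icc 1 n, ∑ k ∈ Finset.Icc 2 n,
        (if k ≤ j ∧ k % 2 = j % 2 then a j * Real.cos ((k-1:ℕ)*t) else 0))
        = ∑ k ∈ Finset.Icc 2 n, γ k * Real.cos ((k-1:ℕ)*t) := by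
      rw [Finset.sum_comm]
      apply Finset.sum_congr rfl
      intro k hk
      simp only [Finset.mem_Icc] at hk
      rw [hγ k (by omega), Finset.sum_filter, Finset.sum_mul]
      rw [← Finset.sum_subset (by intro x hx; simp only [Finset.mem_Icc] at *; omega :
          Finset.Icc k n ⊆ Finset.Icc 1 n)
        (by intro x hx hx2; simp only [Finset.mem_Icc] at hx hx2
            have : ¬ (k ≤ x ∧ k % 2 = x % 2) := by omega
            simp [this])]
      apply Finset.sum_congr rfl
      intro x hx
      simp only [Finset.mem_Icc] at hx
      have h1 : (k ≤ x ∧ k % 2 = x % 2) ↔ (x % 2 = k % 2) := by omega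
      simp only [h1]
      split <;> ring
    rw [hswap]
    ring
  · rw [hγ1, hγ2, ← Finset.sum_neg_distrib, ← Finset.sum_add_distrib]
    apply Finset.sum_congr rfl
    intro j _
    rcases Nat.even_or_odd j with h | h
    · simp [h.neg_one_pow, Nat.even_iff.mp h]
    · simp [h.neg_one_pow, Nat.odd_iff.mp h]
  · rw [hγ1, hγ2, ← Finset.sum_add_distrib, ← ha]
    apply Finset.sum_congr rfl
    intro j _
    rcases Nat.mod_two_eq_zero_or_one j with h | h <;> simp [h]
end
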